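/- arXiv:2012.06783 — 3 statements merged into one kernel-verified Lean document; each statement's English description precedes it below -/
import Mathlib

section
/- Let X be a real Banach space with an unconditional basis (e_n)_{n∈ℕ} satisfying a lower 1-estimate, let Y be a real Banach space, and let T : Y → X be a bounded linear operator that is not compact. Then there exist a semi-normalized sequence (v_j)_{j∈ℕ} in Y and a sequence (u_j)_{j∈ℕ} in X disjointly finitely supported with respect to (e_n) such that (u_j), (v_j) and (T v_j) are each equivalent to the canonical basis of ℓ_1. -/
open scoped BigOperators

/-- `e` is a Schauder basis of `X`: every vector has a unique expansion as a norm-convergent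
series `∑ n, a n • e n` (partial sums over `Finset.range N`). -/
def IsSchauderBasis {X : Type*} [NormedAddCommGroup X] [NormedSpace ℝ X] (e : ℕ → X) : Prop :=
  ∀ x : X, ∃! a : ℕ → ℝ,
    Filter.Tendsto (fun N => ∑ n ∈ Finset.range N, a n • e n) Filter.atTop (nhds x)

/-- `u` is a block basic sequence with respect to `e`. -/
def IsBlockBasic {X : Type*} [NormedAddCommGroup X] [NormedSpace ℝ X]
    (e : ℕ → X) (u : ℕ → X) : Prop :=
  ∃ (A : ℕ → Finset ℕ) (a : ℕ → ℝ),
    (∀ j, (A j).Nonempty) ∧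
    (∀ j, ∀ m ∈ A j, ∀ k ∈ A (j + 1), m < k) ∧
    (∀ j, u j = ∑ n ∈ A j, a n • e n)

/-- A sequence is semi-normalized if its norms are bounded away from zero and from infinity. -/
def SemiNormalized {X : Type*} [NormedAddCommGroup X] (u : ℕ → X) : Prop :=
  ∃ c C : ℝ, 0 < c ∧ ∀ j, c ≤ ‖u j‖ ∧ ‖u j‖ ≤ C

/-- Two sequences (possibly in different spaces) are equivalent. -/
def SeqEquiv {X Y : Type*} [NormedAddCommGroup X] [NormedSpace ℝ X]
    [NormedAddCommGroup Y] [NormedSpace ℝ Y] (u : ℕ → X) (w : ℕ → Y) : Prop :=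
  ∃ C : ℝ, 1 ≤ C ∧ ∀ (a : ℕ → ℝ) (s : Finset ℕ),
    C⁻¹ * ‖∑ j ∈ s, a j • w j‖ ≤ ‖∑ j ∈ s, a j • u j‖ ∧
    ‖∑ j ∈ s, a j • u j‖ ≤ C * ‖∑ j ∈ s, a j • w j‖

/-- A bounded linear operator is compact if the image of the closed unit ball is
relatively compact. -/
def CompactOp {X Y : Type*} [NormedAddCommGroup X] [NormedSpace ℝ X]
    [NormedAddCommGroup Y] [NormedSpace ℝ Y] (T : Y →L[ℝ] X) : Prop :=
  IsCompact (closure (T '' Metric.closedBall 0 1))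

/-- `e` is an unconditional basis of `X`. -/
def IsUncondBasis {X : Type*} [NormedAddCommGroup X] [NormedSpace ℝ X] (e : ℕ → X) : Prop :=
  (∀ n, e n ≠ 0) ∧ ∀ x : X, ∃! a : ℕ → ℝ, HasSum (fun n => a n • e n) x

/-- `u` is disjointly finitely supported with respect to `e`. -/
def DisjSupported {X : Type*} [NormedAddCommGroup X] [NormedSpace ℝ X]
    (e : ℕ → X) (u : ℕ → X) : Prop :=
  ∃ A : ℕ → Finset ℕ, Pairwise (Function.onFun Disjoint A) ∧
    ∀ j, u j ∈ Submodule.span ℝ (e '' (A j : Set ℕ))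

/-- The basis `e` satisfies a lower `q`-estimate. -/
def LowerEstimate {X : Type*} [NormedAddCommGroup X] [NormedSpace ℝ X]
    (e : ℕ → X) (q : ℝ) : Prop :=
  ∃ C : ℝ, 0 < C ∧ ∀ (m : ℕ) (f : Fin m → X) (A : Fin m → Finset ℕ),
    Pairwise (Function.onFun Disjoint A) →
    (∀ i, f i ∈ Submodule.span ℝ (e '' (A i : Set ℕ))) →
    (∑ i, ‖f i‖ ^ q) ^ (1 / q) ≤ C * ‖∑ i, f i‖

/-- The basis `e` satisfies an upper `q`-estimate. -/
def UpperEstimate {X : Type*} [NormedAddCommGroup X] [NormedSpace ℝ X]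
    (e : ℕ → X) (q : ℝ) : Prop :=
  ∃ C : ℝ, 0 < C ∧ ∀ (m : ℕ) (f : Fin m → X) (A : Fin m → Finset ℕ),
    Pairwise (Function.onFun Disjoint A) →
    (∀ i, f i ∈ Submodule.span ℝ (e '' (A i : Set ℕ))) →
    ‖∑ i, f i‖ ≤ C * (∑ i, ‖f i‖ ^ q) ^ (1 / q)

/-- `u` is equivalent to the canonical basis of `ℓ_q`. -/
def EquivCanonLq {X : Type*} [NormedAddCommGroup X] [NormedSpace ℝ X]
    (u : ℕ → X) (q : ℝ) : Prop :=
  ∃ C : ℝ, 1 ≤ C ∧ ∀ (a : ℕ → ℝ) (s : Finset ℕ),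
    C⁻¹ * (∑ j ∈ s, |a j| ^ q) ^ (1 / q) ≤ ‖∑ j ∈ s, a j • u j‖ ∧
    ‖∑ j ∈ s, a j • u j‖ ≤ C * (∑ j ∈ s, |a j| ^ q) ^ (1 / q)

/-- `Z` contains an isomorphic copy of `ℓ_q`: there is a bounded linear map `J : ℓ_q → Z`
which is bounded below. -/
def ContainsLp (Z : Type*) [NormedAddCommGroup Z] [NormedSpace ℝ Z] (q : ℝ) : Prop :=
  ∃ (J : lp (fun _ : ℕ => ℝ) (ENNReal.ofReal q) →ₗ[ℝ] Z) (C c : ℝ), 0 < c ∧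
    ∀ f, ‖J f‖ ≤ C * ‖f‖ ∧ c * ‖f‖ ≤ ‖J f‖

/-- `T` is strictly singular: it is bounded below on no infinite-dimensional subspace. -/
def StrictlySingular {X Y : Type*} [NormedAddCommGroup X] [NormedSpace ℝ X]
    [NormedAddCommGroup Y] [NormedSpace ℝ Y] (T : Y →L[ℝ] X) : Prop :=
  ∀ (Z : Submodule ℝ Y) (c : ℝ), 0 < c → (∀ z ∈ Z, c * ‖z‖ ≤ ‖T z‖) →
    FiniteDimensional ℝ Z

/-- A finite family of Banach spaces is splitting for unconditional bases. -/
def SplittingFamily {ι : Type*} [Fintype ι] (Z : ι → Type*)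
    [∀ i, NormedAddCommGroup (Z i)] [∀ i, NormedSpace ℝ (Z i)] : Prop :=
  ∀ w : ℕ → (∀ i, Z i), IsUncondBasis w →
    ∃ N : ι → Set ℕ, Pairwise (Function.onFun Disjoint N) ∧ (⋃ i, N i) = Set.univ ∧
      ∀ i, Nonempty ((Submodule.span ℝ (w '' N i)).topologicalClosure ≃L[ℝ] Z i)

/-- A pair of Banach spaces is splitting for unconditional bases. -/
def SplittingPair (U V : Type*) [NormedAddCommGroup U] [NormedSpace ℝ U]
    [NormedAddCommGroup V] [NormedSpace ℝ V] : Prop :=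
  ∀ w : ℕ → U × V, IsUncondBasis w →
    ∃ N₁ N₂ : Set ℕ, Disjoint N₁ N₂ ∧ N₁ ∪ N₂ = Set.univ ∧
      Nonempty ((Submodule.span ℝ (w '' N₁)).topologicalClosure ≃L[ℝ] U) ∧
      Nonempty ((Submodule.span ℝ (w '' N₂)).topologicalClosure ≃L[ℝ] V)

/-- `U` has a unique, up to equivalence and permutation, unconditional basis. -/
def HasUTAPBasis (U : Type*) [NormedAddCommGroup U] [NormedSpace ℝ U] : Prop :=
  ∃ e : ℕ → U, IsUncondBasis e ∧ SemiNormalized e ∧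
    ∀ f : ℕ → U, IsUncondBasis f → SemiNormalized f →
      ∃ π : Equiv.Perm ℕ, SeqEquiv (fun n => f (π n)) e

/-- `y` is a subsymmetric basic sequence: semi-normalized, an unconditional basis of its
closed linear span, and equivalent to all of its subsequences. -/
def IsSubsymmetric {X : Type*} [NormedAddCommGroup X] [NormedSpace ℝ X] (y : ℕ → X) : Prop :=
  SemiNormalized y ∧ (∀ n, y n ≠ 0) ∧
  (∀ x : X, x ∈ (Submodule.span ℝ (Set.range y)).topologicalClosure →
    ∃! a : ℕ → ℝ, HasSum (fun n => a n • y n) x) ∧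
  ∀ k : ℕ → ℕ, StrictMono k → SeqEquiv (fun n => y (k n)) y


open Filter Topology in
private lemma abs_sub_le_of_floor_div_eq {κ x y : ℝ} (hκ : 0 < κ)
    (h : ⌊x / κ⌋ = ⌊y / κ⌋) : |x - y| ≤ κ := by
  have h1 : |x / κ - y / κ| < 1 := by
    rw [abs_sub_lt_iff]
    constructor
    · have h2 := Int.lt_floor_add_one (x / κ)
      have h3 := Int.floor_le (y / κ)
      rw [h] at h2
      linarith
    · have h2 := Int.lt_floor_add_one (y / κ)
      have h3 := Int.floor_le (x / κ)
      rw [h] at h3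
      linarith
  have hxy : x - y = κ * (x / κ - y / κ) := by
    field_simp
  rw [hxy, abs_mul, abs_of_pos hκ]
  nlinarith [abs_nonneg (x / κ - y / κ)]

theorem statement4 {X Y : Type*} [NormedAddCommGroup X] [NormedSpace ℝ X] [CompleteSpace X]
    [NormedAddCommGroup Y] [NormedSpace ℝ Y] [CompleteSpace Y]
    (e : ℕ → X) (he : IsUncondBasis e) (hlow : LowerEstimate e 1)
    (T : Y →L[ℝ] X) (hT : ¬ CompactOp T) :
    ∃ (v : ℕ → Y) (u : ℕ → X), SemiNormalized v ∧ DisjSupported e u ∧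
      EquivCanonLq u 1 ∧ EquivCanonLq v 1 ∧ EquivCanonLq (fun j => T (v j)) 1 := by
  classical
  obtain ⟨C, hC, hCs⟩ := hlow
  -- coefficient functionals
  choose a ha using fun x : X => (he.2 x).exists
  have huniq : ∀ (x : X) (b : ℕ → ℝ), HasSum (fun n => b n • e n) x → b = a x :=
    fun x b hb => (he.2 x).unique hb (ha x)
  have hepos : ∀ n, (0:ℝ) < ‖e n‖ := fun n => norm_pos_iff.2 (he.1 n)
  -- the lower estimate in coefficient form
  have hlow' : ∀ (s : Finset ℕ) (c : ℕ → ℝ),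
      ∑ n ∈ s, |c n| * ‖e n‖ ≤ C * ‖∑ n ∈ s, c n • e n‖ := by
    intro s c
    set en : Fin s.card → ℕ := fun i => (s.equivFin.symm i : ℕ) with hen
    have heninj : Function.Injective en :=
      fun i j hij => s.equivFin.symm.injective (Subtype.coe_injective hij)
    have hre : ∀ F : ℕ → ℝ, ∑ i, F (en i) = ∑ n ∈ s, F n := by
      intro F
      rw [← Finset.sum_coe_sort s F]
      exact (Fintype.sum_equiv s.equivFin (fun x => F (x : ℕ)) (fun i => F (en i))
        (fun x => by simp [hen])).symm
    have hre' : ∀ F : ℕ → X, ∑ i, F (en i) = ∑ n ∈ s, F n := by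
      intro F
      rw [← Finset.sum_coe_sort s F]
      exact (Fintype.sum_equiv s.equivFin (fun x => F (x : ℕ)) (fun i => F (en i))
        (fun x => by simp [hen])).symm
    have hkey := hCs s.card (fun i => c (en i) • e (en i)) (fun i => {en i})
      (fun i j hij => by
        simpa [Function.onFun, Finset.disjoint_singleton] using fun h => hij (heninj h))
      (fun i => Submodule.smul_mem _ _ (Submodule.subset_span ⟨en i, by simp, rfl⟩))
    simp only [one_div_one, Real.rpow_one] at hkey
    calc ∑ n ∈ s, |c n| * ‖e n‖ = ∑ i, |c (en i)| * ‖e (en i)‖ :=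
          (hre fun n => |c n| * ‖e n‖).symm
      _ = ∑ i, ‖c (en i) • e (en i)‖ := by
          simp [norm_smul, Real.norm_eq_abs]
      _ ≤ C * ‖∑ i, c (en i) • e (en i)‖ := hkey
      _ = C * ‖∑ n ∈ s, c n • e n‖ := by rw [hre' fun n => c n • e n]
  -- bound on partial coefficient sums
  have Bnd : ∀ (x : X) (s : Finset ℕ), ∑ n ∈ s, |a x n| * ‖e n‖ ≤ C * ‖x‖ := by
    intro x s
    refine le_of_forall_pos_le_add fun δ hδ => ?_
    have hεp : (0:ℝ) < δ / C := by positivity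
    have htd := ha x
    rw [HasSum, Metric.tendsto_nhds] at htd
    obtain ⟨t₁, ht₁⟩ := (htd (δ / C) hεp).exists_forall_of_atTop
    have hst : ‖∑ n ∈ s ∪ t₁, a x n • e n - x‖ < δ / C := by
      have h0 := ht₁ (s ∪ t₁) Finset.subset_union_right
      simpa [dist_eq_norm] using h0
    calc ∑ n ∈ s, |a x n| * ‖e n‖
        ≤ ∑ n ∈ s ∪ t₁, |a x n| * ‖e n‖ := by
          refine Finset.sum_le_sum_of_subset_of_nonneg Finset.subset_union_left ?_
          intros; positivity
      _ ≤ C * ‖∑ n ∈ s ∪ t₁, a x n • e n‖ := hlow' _ _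
      _ ≤ C * (‖x‖ + δ / C) := by
          refine mul_le_mul_of_nonneg_left ?_ hC.le
          have h7 := norm_sub_norm_le (∑ n ∈ s ∪ t₁, a x n • e n) x
          linarith
      _ = C * ‖x‖ + δ := by field_simp
  have hsummable : ∀ x : X, Summable fun n => |a x n| * ‖e n‖ := by
    intro x
    refine summable_of_sum_le ?_ fun t => Bnd x t
    intro n
    positivity
  have hnormle : ∀ x : X, ‖x‖ ≤ ∑' n, |a x n| * ‖e n‖ := by
    intro x
    have h1 : ‖x‖ = ‖∑' n, a x n • e n‖ := by rw [(ha x).tsum_eq]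
    rw [h1]
    have h2 : Summable fun n => ‖a x n • e n‖ := by
      simpa [norm_smul, Real.norm_eq_abs] using hsummable x
    refine le_trans (norm_tsum_le_tsum_norm h2) (le_of_eq ?_)
    simp [norm_smul, Real.norm_eq_abs]
  -- linearity of coefficients
  have hasub : ∀ x z : X, a (x - z) = fun n => a x n - a z n := by
    intro x z
    refine (huniq _ _ ?_).symm
    simpa [sub_smul] using (ha x).sub (ha z)
  have hacomb : ∀ (s : Finset ℕ) (c : ℕ → ℝ) (z : ℕ → X),
      a (∑ i ∈ s, c i • z i) = fun n => ∑ i ∈ s, c i * a (z i) n := by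
    intro s c z
    refine (huniq _ _ ?_).symm
    have h1 : ∀ i ∈ s, HasSum (fun n => (c i * a (z i) n) • e n) (c i • z i) := by
      intro i _
      simpa [mul_smul] using (ha (z i)).const_smul (c i)
    simpa [Finset.sum_smul] using hasSum_sum h1
  -- non-compactness gives a separated sequence
  have hTB : ¬ TotallyBounded (⇑T '' Metric.closedBall 0 1) := fun h =>
    hT (isCompact_iff_totallyBounded_isComplete.mpr ⟨h.closure, isClosed_closure.isComplete⟩)
  rw [Metric.totallyBounded_iff] at hTB
  push_neg at hTB
  obtain ⟨ε, hε, hcov⟩ := hTB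
  have hpick : ∀ F : Finset X, ∃ z : Y, ‖z‖ ≤ 1 ∧ ∀ x ∈ F, ε ≤ ‖T z - x‖ := by
    intro F
    have h1 := hcov F F.finite_toSet
    rw [Set.not_subset] at h1
    obtain ⟨p, hp, hp2⟩ := h1
    obtain ⟨z, hz, rfl⟩ := hp
    refine ⟨z, by simpa [Metric.mem_closedBall, dist_zero_right] using hz, ?_⟩
    intro x hx
    by_contra hlt
    push_neg at hlt
    refine hp2 (Set.mem_biUnion (by exact_mod_cast hx) ?_)
    rw [Metric.mem_ball, dist_eq_norm]
    exact hlt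
  choose pick hpick1 hpick2 using hpick
  set aux : ℕ → Finset X :=
    fun k => Nat.rec (motive := fun _ => Finset X) ∅ (fun _ F => insert (T (pick F)) F) k
    with hauxdef
  set y : ℕ → Y := fun k => pick (aux k) with hydef
  have hauxsucc : ∀ k, aux (k + 1) = insert (T (y k)) (aux k) := fun k => rfl
  have hauxmono : ∀ {j k : ℕ}, j ≤ k → aux j ⊆ aux k := by
    intro j k hjk
    induction hjk with
    | refl => exact Finset.Subset.refl _
    | step _ ih => exact ih.trans (by rw [hauxsucc]; exact Finset.subset_insert _ _)
  have hymem : ∀ {j k : ℕ}, j < k → T (y j) ∈ aux k := by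
    intro j k hjk
    exact hauxmono hjk (by rw [hauxsucc]; exact Finset.mem_insert_self _ _)
  have hynorm : ∀ k, ‖y k‖ ≤ 1 := fun k => hpick1 (aux k)
  have hsep : ∀ {j k : ℕ}, j ≠ k → ε ≤ ‖T (y j) - T (y k)‖ := by
    have hlt : ∀ {j k : ℕ}, j < k → ε ≤ ‖T (y j) - T (y k)‖ := by
      intro j k hjk
      have h0 := hpick2 (aux k) (T (y j)) (hymem hjk)
      rwa [norm_sub_rev]
    intro j k hjk
    rcases lt_or_gt_of_ne hjk with h | h
    · exact hlt h
    · rw [norm_sub_rev]; exact hlt h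
  -- uniform coefficient bounds
  have hTy : ∀ j, ‖T (y j)‖ ≤ ‖T‖ := by
    intro j
    calc ‖T (y j)‖ ≤ ‖T‖ * ‖y j‖ := T.le_opNorm _
      _ ≤ ‖T‖ * 1 := mul_le_mul_of_nonneg_left (hynorm j) (norm_nonneg T)
      _ = ‖T‖ := mul_one _
  have hcoefbd : ∀ j n, |a (T (y j)) n| ≤ C * ‖T‖ / ‖e n‖ := by
    intro j n
    rw [le_div_iff₀ (hepos n)]
    calc |a (T (y j)) n| * ‖e n‖ = ∑ m ∈ {n}, |a (T (y j)) m| * ‖e m‖ := by simp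
      _ ≤ C * ‖T (y j)‖ := Bnd _ _
      _ ≤ C * ‖T‖ := mul_le_mul_of_nonneg_left (hTy j) hC.le
  -- the gliding hump step
  have hstep : ∀ N : ℕ, ∃ (v : Y) (N' : ℕ), N ≤ N' ∧ ‖v‖ ≤ 2 ∧ ε ≤ ‖T v‖ ∧
      ∀ s : Finset ℕ, Disjoint s (Finset.Ico N N') →
        ∑ n ∈ s, |a (T v) n| * ‖e n‖ ≤ ε / 4 := by
    intro N
    set S := ∑ n ∈ Finset.range N, ‖e n‖ with hS
    have hS0 : 0 ≤ S := Finset.sum_nonneg fun _ _ => norm_nonneg _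
    set κ := ε / (8 * (S + 1)) with hκdef
    have hκ : 0 < κ := by positivity
    have hmaps : Set.MapsTo (fun j (i : Fin N) => ⌊a (T (y j)) i / κ⌋) Set.univ
        (Set.univ.pi fun i : Fin N =>
          Set.Icc ⌊-(C * ‖T‖ / ‖e (i : ℕ)‖) / κ⌋ ⌊(C * ‖T‖ / ‖e (i : ℕ)‖) / κ⌋) := by
      intro j _
      rw [Set.mem_univ_pi]
      intro i
      have h1 := hcoefbd j i
      rw [abs_le] at h1
      constructor
      · exact Int.floor_le_floor (by gcongr; exact h1.1)
      · exact Int.floor_le_floor (by gcongr; exact h1.2)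
    obtain ⟨j, -, k, -, hjk, hG⟩ := Set.infinite_univ.exists_ne_map_eq_of_mapsTo hmaps
      (Set.Finite.pi fun i => Set.finite_Icc _ _)
    refine ⟨y j - y k, ?_⟩
    have hTv : T (y j - y k) = T (y j) - T (y k) := map_sub T _ _
    have hcoord : ∀ n, n < N → |a (T (y j - y k)) n| ≤ κ := by
      intro n hn
      have h1 : a (T (y j - y k)) n = a (T (y j)) n - a (T (y k)) n := by
        rw [hTv]
        exact congrFun (hasub (T (y j)) (T (y k))) n
      rw [h1]
      exact abs_sub_le_of_floor_div_eq hκ (congrFun hG ⟨n, hn⟩)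
    have hinit : ∑ n ∈ Finset.range N, |a (T (y j - y k)) n| * ‖e n‖ ≤ ε / 8 := by
      calc ∑ n ∈ Finset.range N, |a (T (y j - y k)) n| * ‖e n‖
          ≤ ∑ n ∈ Finset.range N, κ * ‖e n‖ := by
            refine Finset.sum_le_sum fun n hn => ?_
            exact mul_le_mul_of_nonneg_right (hcoord n (Finset.mem_range.1 hn)) (norm_nonneg _)
        _ = κ * S := by rw [← Finset.mul_sum]
        _ ≤ ε / 8 := by
            rw [hκdef, div_mul_eq_mul_div, div_le_div_iff₀ (by positivity) (by norm_num)]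
            nlinarith
    obtain ⟨s₀, hs₀⟩ := (hsummable (T (y j - y k))).vanishing
      (Iio_mem_nhds (by positivity : (0:ℝ) < ε / 8))
    refine ⟨max N (s₀.sup id + 1), le_max_left _ _, ?_, ?_, ?_⟩
    · calc ‖y j - y k‖ ≤ ‖y j‖ + ‖y k‖ := norm_sub_le _ _
        _ ≤ 2 := by have := hynorm j; have := hynorm k; linarith
    · rw [hTv]; exact hsep hjk
    · intro s hs
      rw [← Finset.sum_filter_add_sum_filter_not s (fun n => n < N)
        (fun n => |a (T (y j - y k)) n| * ‖e n‖)]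
      have h1 : ∑ n ∈ s.filter (fun n => n < N), |a (T (y j - y k)) n| * ‖e n‖ ≤ ε / 8 := by
        refine le_trans (Finset.sum_le_sum_of_subset_of_nonneg ?_ ?_) hinit
        · intro n hn
          simp only [Finset.mem_filter] at hn
          exact Finset.mem_range.2 hn.2
        · intros; positivity
      have h2 : ∑ n ∈ s.filter (fun n => ¬ n < N), |a (T (y j - y k)) n| * ‖e n‖ ≤ ε / 8 := by
        have hdisj : Disjoint (s.filter fun n => ¬ n < N) s₀ := by
          rw [Finset.disjoint_left]
          intro n hn hn0
          simp only [Finset.mem_filter, not_lt] at hn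
          have h3 : n ∉ Finset.Ico N (max N (s₀.sup id + 1)) :=
            fun hmem => (Finset.disjoint_left.mp hs) hn.1 hmem
          rw [Finset.mem_Ico] at h3
          push_neg at h3
          have h4 := h3 hn.2
          have h5 : s₀.sup id + 1 ≤ n := le_trans (le_max_right _ _) h4
          have h6 : n ≤ s₀.sup id := Finset.le_sup (f := id) hn0
          omega
        exact le_of_lt (Set.mem_Iio.mp (hs₀ _ hdisj))
      linarith
  -- recursive construction of blocks
  choose sv sN hsNle hsvnorm hsTv hsoff using hstep
  set NN : ℕ → ℕ := fun i => Nat.rec (motive := fun _ => ℕ) 0 (fun _ M => sN M) i with hNNdef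
  set v : ℕ → Y := fun i => sv (NN i) with hvdef
  set w : ℕ → X := fun i => T (v i) with hwdef
  set B : ℕ → Finset ℕ := fun i => Finset.Ico (NN i) (NN (i + 1)) with hBdef
  have hNNsucc : ∀ i, NN (i + 1) = sN (NN i) := fun i => rfl
  have hNNmono : Monotone NN := monotone_nat_of_le_succ fun i => by
    rw [hNNsucc]; exact hsNle _
  have hoff : ∀ (i : ℕ) (s : Finset ℕ), Disjoint s (B i) →
      ∑ n ∈ s, |a (w i) n| * ‖e n‖ ≤ ε / 4 :=
    fun i s h => hsoff (NN i) s h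
  have hwlow : ∀ i, ε ≤ ‖w i‖ := fun i => hsTv (NN i)
  have hvbd : ∀ i, ‖v i‖ ≤ 2 := fun i => hsvnorm (NN i)
  have hBd : ∀ {i j : ℕ}, i ≠ j → Disjoint (B i) (B j) := by
    have hlt : ∀ {i j : ℕ}, i < j → Disjoint (B i) (B j) := by
      intro i j hij
      rw [Finset.disjoint_left]
      intro n hn hn2
      rw [hBdef] at hn hn2
      simp only [Finset.mem_Ico] at hn hn2
      have h9 : NN (i + 1) ≤ NN j := hNNmono (Nat.succ_le_of_lt hij)
      omega
    intro i j hij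
    rcases lt_or_gt_of_ne hij with h | h
    · exact hlt h
    · exact (hlt h).symm
  have hbig : ∀ i, 3 * (ε / 4) ≤ ∑ n ∈ B i, |a (w i) n| * ‖e n‖ := by
    intro i
    have h1 : ε ≤ ∑' n, |a (w i) n| * ‖e n‖ := le_trans (hwlow i) (hnormle _)
    have h2 : ∑' n, |a (w i) n| * ‖e n‖ ≤ (∑ n ∈ B i, |a (w i) n| * ‖e n‖) + ε / 4 := by
      refine Summable.tsum_le_of_sum_le (hsummable _) fun t => ?_
      calc ∑ n ∈ t, |a (w i) n| * ‖e n‖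
          ≤ ∑ n ∈ B i ∪ (t \ B i), |a (w i) n| * ‖e n‖ := by
            refine Finset.sum_le_sum_of_subset_of_nonneg ?_ ?_
            · intro n hn
              rw [Finset.mem_union, Finset.mem_sdiff]
              by_cases hb : n ∈ B i
              · exact Or.inl hb
              · exact Or.inr ⟨hn, hb⟩
            · intros; positivity
        _ = (∑ n ∈ B i, |a (w i) n| * ‖e n‖) + ∑ n ∈ t \ B i, |a (w i) n| * ‖e n‖ :=
            Finset.sum_union Finset.disjoint_sdiff
        _ ≤ (∑ n ∈ B i, |a (w i) n| * ‖e n‖) + ε / 4 := by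
            have h3 := hoff i (t \ B i) Finset.sdiff_disjoint
            linarith
    linarith
  -- the key lower ℓ₁-estimate
  have key : ∀ (c : ℕ → ℝ) (s : Finset ℕ),
      (ε / 2) * ∑ i ∈ s, |c i| ≤ C * ‖∑ i ∈ s, c i • w i‖ := by
    intro c s
    set x := ∑ i ∈ s, c i • w i with hx
    have hax : ∀ n, a x n = ∑ i ∈ s, c i * a (w i) n :=
      fun n => congrFun (hacomb s c w) n
    have hU : ∑ i ∈ s, ∑ n ∈ B i, |a x n| * ‖e n‖ ≤ C * ‖x‖ := by
      rw [← Finset.sum_biUnion (fun i _ j _ hij => hBd hij)]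
      exact Bnd x _
    have hblock : ∀ i ∈ s,
        |c i| * (∑ n ∈ B i, |a (w i) n| * ‖e n‖)
          - ∑ i' ∈ s.erase i, |c i'| * (∑ n ∈ B i, |a (w i') n| * ‖e n‖)
        ≤ ∑ n ∈ B i, |a x n| * ‖e n‖ := by
      intro i hi
      have hptw : ∀ n ∈ B i,
          |c i| * (|a (w i) n| * ‖e n‖)
            - ∑ i' ∈ s.erase i, |c i'| * (|a (w i') n| * ‖e n‖)
          ≤ |a x n| * ‖e n‖ := by
        intro n _
        have h1 : |c i * a (w i) n| ≤ |a x n| + ∑ i' ∈ s.erase i, |c i' * a (w i') n| := by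
          have h2 : c i * a (w i) n = a x n - ∑ i' ∈ s.erase i, c i' * a (w i') n := by
            rw [hax n, ← Finset.sum_erase_add s _ hi]
            ring
          rw [h2]
          have h2a := abs_sub (a x n) (∑ i' ∈ s.erase i, c i' * a (w i') n)
          have h2b := Finset.abs_sum_le_sum_abs (fun i' => c i' * a (w i') n) (s.erase i)
          linarith
        have h3 : |c i * a (w i) n| * ‖e n‖
            ≤ |a x n| * ‖e n‖ + ∑ i' ∈ s.erase i, |c i' * a (w i') n| * ‖e n‖ := by
          rw [← Finset.sum_mul, ← add_mul]
          exact mul_le_mul_of_nonneg_right h1 (norm_nonneg _)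
        have h4 : |c i| * (|a (w i) n| * ‖e n‖) = |c i * a (w i) n| * ‖e n‖ := by
          rw [abs_mul, mul_assoc]
        have h5 : ∑ i' ∈ s.erase i, |c i'| * (|a (w i') n| * ‖e n‖)
            = ∑ i' ∈ s.erase i, |c i' * a (w i') n| * ‖e n‖ :=
          Finset.sum_congr rfl fun i' _ => by rw [abs_mul, mul_assoc]
        rw [h4, h5]
        linarith
      have h6 := Finset.sum_le_sum hptw
      rw [Finset.sum_sub_distrib] at h6
      have h7 : ∑ n ∈ B i, |c i| * (|a (w i) n| * ‖e n‖)
          = |c i| * ∑ n ∈ B i, |a (w i) n| * ‖e n‖ := (Finset.mul_sum _ _ _).symm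
      have h8 : ∑ n ∈ B i, ∑ i' ∈ s.erase i, |c i'| * (|a (w i') n| * ‖e n‖)
          = ∑ i' ∈ s.erase i, |c i'| * ∑ n ∈ B i, |a (w i') n| * ‖e n‖ := by
        rw [Finset.sum_comm]
        exact Finset.sum_congr rfl fun i' _ => (Finset.mul_sum _ _ _).symm
      rw [h7, h8] at h6
      exact h6
    have hD : ∑ i ∈ s, ∑ i' ∈ s.erase i, |c i'| * (∑ n ∈ B i, |a (w i') n| * ‖e n‖)
        ≤ (ε / 4) * ∑ i ∈ s, |c i| := by
      have hswap : ∑ i ∈ s, ∑ i' ∈ s.erase i, |c i'| * (∑ n ∈ B i, |a (w i') n| * ‖e n‖)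
          = ∑ i' ∈ s, ∑ i ∈ s.erase i', |c i'| * (∑ n ∈ B i, |a (w i') n| * ‖e n‖) := by
        refine Finset.sum_comm' ?_
        intro p q
        constructor
        · rintro ⟨hp, hq⟩
          exact ⟨Finset.mem_erase.2 ⟨(Finset.ne_of_mem_erase hq).symm, hp⟩,
            Finset.mem_of_mem_erase hq⟩
        · rintro ⟨hp, hq⟩
          exact ⟨Finset.mem_of_mem_erase hp,
            Finset.mem_erase.2 ⟨(Finset.ne_of_mem_erase hp).symm, hq⟩⟩
      rw [hswap, Finset.mul_sum]
      refine Finset.sum_le_sum fun i' _ => ?_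
      rw [← Finset.mul_sum]
      have h8 : ∑ i ∈ s.erase i', ∑ n ∈ B i, |a (w i') n| * ‖e n‖ ≤ ε / 4 := by
        rw [← Finset.sum_biUnion (fun p _ q _ hpq => hBd hpq)]
        refine hoff i' _ ?_
        rw [Finset.disjoint_biUnion_left]
        intro p hp
        exact hBd (Finset.ne_of_mem_erase hp)
      calc |c i'| * ∑ i ∈ s.erase i', ∑ n ∈ B i, |a (w i') n| * ‖e n‖
          ≤ |c i'| * (ε / 4) := mul_le_mul_of_nonneg_left h8 (abs_nonneg _)
        _ = (ε / 4) * |c i'| := mul_comm _ _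
    have h9 : (3 * (ε / 4)) * ∑ i ∈ s, |c i|
        ≤ ∑ i ∈ s, |c i| * (∑ n ∈ B i, |a (w i) n| * ‖e n‖) := by
      rw [Finset.mul_sum]
      refine Finset.sum_le_sum fun i _ => ?_
      rw [mul_comm (3 * (ε / 4))]
      exact mul_le_mul_of_nonneg_left (hbig i) (abs_nonneg _)
    have h10 : ∑ i ∈ s, (|c i| * (∑ n ∈ B i, |a (w i) n| * ‖e n‖)
        - ∑ i' ∈ s.erase i, |c i'| * (∑ n ∈ B i, |a (w i') n| * ‖e n‖))
        ≤ C * ‖x‖ := le_trans (Finset.sum_le_sum hblock) hU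
    rw [Finset.sum_sub_distrib] at h10
    linarith
  -- auxiliary facts for the assembly
  have hwub : ∀ i, ‖w i‖ ≤ 2 * ‖T‖ := by
    intro i
    calc ‖w i‖ = ‖T (v i)‖ := rfl
      _ ≤ ‖T‖ * ‖v i‖ := T.le_opNorm _
      _ ≤ ‖T‖ * 2 := mul_le_mul_of_nonneg_left (hvbd i) (norm_nonneg T)
      _ = 2 * ‖T‖ := by ring
  have hTpos : 0 < ‖T‖ := by
    by_contra h
    push_neg at h
    have h2 := hwub 0
    have h3 := hwlow 0
    nlinarith [norm_nonneg T]
  have hrpow : ∀ (c : ℕ → ℝ) (s : Finset ℕ),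
      (∑ j ∈ s, |c j| ^ (1:ℝ)) ^ (1 / (1:ℝ)) = ∑ j ∈ s, |c j| := by
    intro c s
    norm_num
  have habsnn : ∀ (c : ℕ → ℝ) (s : Finset ℕ), (0:ℝ) ≤ ∑ j ∈ s, |c j| :=
    fun c s => Finset.sum_nonneg fun j _ => abs_nonneg _
  have hwT : ∀ (c : ℕ → ℝ) (s : Finset ℕ), ∑ i ∈ s, c i • w i = T (∑ i ∈ s, c i • v i) := by
    intro c s
    rw [map_sum]
    exact Finset.sum_congr rfl fun i _ => by rw [map_smul]
  refine ⟨v, fun n => ‖e n‖⁻¹ • e n, ?_, ?_, ?_, ?_, ?_⟩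
  · -- SemiNormalized v
    refine ⟨ε / ‖T‖, 2, by positivity, fun i => ⟨?_, hvbd i⟩⟩
    rw [div_le_iff₀ hTpos]
    calc ε ≤ ‖w i‖ := hwlow i
      _ ≤ ‖T‖ * ‖v i‖ := T.le_opNorm _
      _ = ‖v i‖ * ‖T‖ := mul_comm _ _
  · -- DisjSupported
    refine ⟨fun j => {j}, ?_, ?_⟩
    · intro i j hij
      exact Finset.disjoint_singleton.2 hij
    · intro j
      exact Submodule.smul_mem _ _ (Submodule.subset_span ⟨j, by simp, rfl⟩)
  · -- EquivCanonLq u 1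
    refine ⟨max C 1, le_max_right _ _, fun c s => ?_⟩
    have hpos : (0:ℝ) < max C 1 := lt_of_lt_of_le one_pos (le_max_right _ _)
    have hsum_eq : ∑ j ∈ s, c j • (‖e j‖⁻¹ • e j) = ∑ j ∈ s, (c j * ‖e j‖⁻¹) • e j :=
      Finset.sum_congr rfl fun j _ => by rw [smul_smul]
    have hlower : ∑ j ∈ s, |c j| ≤ C * ‖∑ j ∈ s, c j • (‖e j‖⁻¹ • e j)‖ := by
      rw [hsum_eq]
      have h1 := hlow' s fun j => c j * ‖e j‖⁻¹
      have h2 : ∑ n ∈ s, |c n * ‖e n‖⁻¹| * ‖e n‖ = ∑ n ∈ s, |c n| := by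
        refine Finset.sum_congr rfl fun n _ => ?_
        rw [abs_mul, abs_of_nonneg (inv_nonneg.2 (norm_nonneg _)), mul_assoc,
          inv_mul_cancel₀ (hepos n).ne', mul_one]
      rwa [h2] at h1
    have hunorm : ∀ j, ‖(‖e j‖⁻¹ • e j : X)‖ = 1 := by
      intro j
      rw [norm_smul, norm_inv, norm_norm, inv_mul_cancel₀ (hepos j).ne']
    constructor
    · rw [hrpow, inv_mul_le_iff₀ hpos]
      calc ∑ j ∈ s, |c j| ≤ C * ‖∑ j ∈ s, c j • (‖e j‖⁻¹ • e j)‖ := hlower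
        _ ≤ max C 1 * ‖∑ j ∈ s, c j • (‖e j‖⁻¹ • e j)‖ :=
            mul_le_mul_of_nonneg_right (le_max_left _ _) (norm_nonneg _)
    · rw [hrpow]
      calc ‖∑ j ∈ s, c j • (‖e j‖⁻¹ • e j)‖ ≤ ∑ j ∈ s, ‖c j • (‖e j‖⁻¹ • e j)‖ :=
            norm_sum_le _ _
        _ = ∑ j ∈ s, |c j| := by
            refine Finset.sum_congr rfl fun j _ => ?_
            rw [norm_smul, hunorm j, Real.norm_eq_abs, mul_one]
        _ ≤ max C 1 * ∑ j ∈ s, |c j| := le_mul_of_one_le_left (habsnn c s) (le_max_right _ _)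
  · -- EquivCanonLq v 1
    refine ⟨max (2 * C * ‖T‖ / ε) 2, le_trans (by norm_num) (le_max_right _ _), fun c s => ?_⟩
    have hpos : (0:ℝ) < max (2 * C * ‖T‖ / ε) 2 :=
      lt_of_lt_of_le two_pos (le_max_right _ _)
    constructor
    · rw [hrpow, inv_mul_le_iff₀ hpos]
      have h1 : ∑ j ∈ s, |c j| ≤ (2 * C * ‖T‖ / ε) * ‖∑ j ∈ s, c j • v j‖ := by
        rw [div_mul_eq_mul_div, le_div_iff₀ hε]
        have h2 := key c s
        have h3 : ‖∑ i ∈ s, c i • w i‖ ≤ ‖T‖ * ‖∑ i ∈ s, c i • v i‖ := by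
          rw [hwT c s]
          exact T.le_opNorm _
        nlinarith [habsnn c s, norm_nonneg (∑ j ∈ s, c j • v j)]
      calc ∑ j ∈ s, |c j| ≤ (2 * C * ‖T‖ / ε) * ‖∑ j ∈ s, c j • v j‖ := h1
        _ ≤ max (2 * C * ‖T‖ / ε) 2 * ‖∑ j ∈ s, c j • v j‖ :=
            mul_le_mul_of_nonneg_right (le_max_left _ _) (norm_nonneg _)
    · rw [hrpow]
      calc ‖∑ j ∈ s, c j • v j‖ ≤ ∑ j ∈ s, ‖c j • v j‖ := norm_sum_le _ _
        _ ≤ ∑ j ∈ s, |c j| * 2 := by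
            refine Finset.sum_le_sum fun j _ => ?_
            rw [norm_smul, Real.norm_eq_abs]
            exact mul_le_mul_of_nonneg_left (hvbd j) (abs_nonneg _)
        _ = 2 * ∑ j ∈ s, |c j| := by rw [← Finset.sum_mul, mul_comm]
        _ ≤ max (2 * C * ‖T‖ / ε) 2 * ∑ j ∈ s, |c j| :=
            mul_le_mul_of_nonneg_right (le_max_right _ _) (habsnn c s)
  · -- EquivCanonLq (T ∘ v) 1
    have hgoal : EquivCanonLq w 1 := by
      refine ⟨max (2 * C / ε) (2 * ‖T‖ + 1), ?_, fun c s => ?_⟩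
      · refine le_trans ?_ (le_max_right _ _)
        nlinarith [norm_nonneg T]
      have hpos : (0:ℝ) < max (2 * C / ε) (2 * ‖T‖ + 1) :=
        lt_of_lt_of_le (by nlinarith [norm_nonneg T]) (le_max_right _ _)
      constructor
      · rw [hrpow, inv_mul_le_iff₀ hpos]
        have h1 : ∑ j ∈ s, |c j| ≤ (2 * C / ε) * ‖∑ j ∈ s, c j • w j‖ := by
          rw [div_mul_eq_mul_div, le_div_iff₀ hε]
          have h2 := key c s
          nlinarith [habsnn c s, norm_nonneg (∑ j ∈ s, c j • w j)]
        calc ∑ j ∈ s, |c j| ≤ (2 * C / ε) * ‖∑ j ∈ s, c j • w j‖ := h1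
          _ ≤ max (2 * C / ε) (2 * ‖T‖ + 1) * ‖∑ j ∈ s, c j • w j‖ :=
              mul_le_mul_of_nonneg_right (le_max_left _ _) (norm_nonneg _)
      · rw [hrpow]
        calc ‖∑ j ∈ s, c j • w j‖ ≤ ∑ j ∈ s, ‖c j • w j‖ := norm_sum_le _ _
          _ ≤ ∑ j ∈ s, |c j| * (2 * ‖T‖ + 1) := by
              refine Finset.sum_le_sum fun j _ => ?_
              rw [norm_smul, Real.norm_eq_abs]
              refine mul_le_mul_of_nonneg_left ?_ (abs_nonneg _)
              exact le_trans (hwub j) (by linarith)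
          _ = (2 * ‖T‖ + 1) * ∑ j ∈ s, |c j| := by rw [← Finset.sum_mul, mul_comm]
          _ ≤ max (2 * C / ε) (2 * ‖T‖ + 1) * ∑ j ∈ s, |c j| :=
              mul_le_mul_of_nonneg_right (le_max_right _ _) (habsnn c s)
    exact hgoal
end

section
/- Let 1 ≤ q < ∞. Let X be a real Banach space with an unconditional basis (e_n)_{n∈ℕ} satisfying a lower q-estimate, let Y be a real Banach space with an unconditional basis (y_n)_{n∈ℕ} satisfying an upper q-estimate, and let T : Y → X be a bounded linear operator that is not compact. Then there exist a sequence (v_j)_{j∈ℕ} in Y disjointly finitely supported with respect to (y_n) and a sequence (u_j)_{j∈ℕ} in X disjointly finitely supported with respect to (e_n) such that (u_j), (v_j) and (T v_j) are each equivalent to the canonical basis of ℓ_q. -/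
open scoped BigOperators

section AuxiliaryMachinery
open scoped BigOperators ENNReal Topology
open Filter
open Filter

noncomputable section Machinery

variable {Y : Type*} [NormedAddCommGroup Y] [NormedSpace ℝ Y]

/-- partial sums over finsets of `a n • y n` are bounded when summable -/
lemma partialSums_bdd (y : ℕ → Y) (a : ℕ → ℝ) (h : Summable fun n => a n • y n) :
    ∃ M : ℝ, ∀ F : Finset ℕ, ‖∑ n ∈ F, a n • y n‖ ≤ M := by
  obtain ⟨s, hs⟩ := h.vanishing (Metric.ball_mem_nhds (0 : Y) one_pos)
  refine ⟨1 + ∑ n ∈ s, ‖a n • y n‖, fun F => ?_⟩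
  have hsplit : ∑ n ∈ F, a n • y n
      = (∑ n ∈ F \ s, a n • y n) + ∑ n ∈ F ∩ s, a n • y n := by
    rw [← Finset.sum_union (Finset.disjoint_sdiff_inter F s), Finset.sdiff_union_inter]
  rw [hsplit]
  have h1 : ‖∑ n ∈ F \ s, a n • y n‖ ≤ 1 := by
    have h1' := hs (F \ s) Finset.sdiff_disjoint
    rw [Metric.mem_ball, dist_zero_right] at h1'
    exact h1'.le
  have h2 : ‖∑ n ∈ F ∩ s, a n • y n‖ ≤ ∑ n ∈ s, ‖a n • y n‖ := by
    refine (norm_sum_le _ _).trans ?_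
    exact Finset.sum_le_sum_of_subset_of_nonneg Finset.inter_subset_right
      (fun i _ _ => norm_nonneg _)
  calc ‖_ + _‖ ≤ _ + _ := norm_add_le _ _
    _ ≤ _ := add_le_add h1 h2

lemma memℓp_partialSums (y : ℕ → Y) (a : ℕ → ℝ) (h : Summable fun n => a n • y n) :
    Memℓp (fun F : Finset ℕ => ∑ n ∈ F, a n • y n) ∞ := by
  obtain ⟨M, hM⟩ := partialSums_bdd y a h
  exact memℓp_infty ⟨M, by rintro x ⟨F, rfl⟩; exact hM F⟩

/-- The submodule of `lp ∞` consisting of partial-sum families of summable series. -/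
def goodSet (y : ℕ → Y) : Submodule ℝ (lp (fun _ : Finset ℕ => Y) ∞) where
  carrier := {g | ∃ a : ℕ → ℝ, Summable (fun n => a n • y n) ∧
    ∀ F : Finset ℕ, (g : ∀ _ : Finset ℕ, Y) F = ∑ n ∈ F, a n • y n}
  zero_mem' := ⟨0, by simp [summable_zero], by simp⟩
  add_mem' := by
    rintro g h ⟨a, ha, hga⟩ ⟨b, hb, hgb⟩
    refine ⟨a + b, by simpa [add_smul] using ha.add hb, fun F => ?_⟩
    simp [lp.coeFn_add, hga F, hgb F, add_smul, Finset.sum_add_distrib]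
  smul_mem' := by
    rintro c g ⟨a, ha, hga⟩
    refine ⟨c • a, by simpa [smul_smul] using ha.const_smul c, fun F => ?_⟩
    simp [lp.coeFn_smul, hga F, smul_smul, Finset.smul_sum]

end Machinery

noncomputable section Machinery2
set_option linter.unusedSectionVars false
variable {Y : Type*} [NormedAddCommGroup Y] [NormedSpace ℝ Y]

lemma mem_goodSet_iff (y : ℕ → Y) {g : lp (fun _ : Finset ℕ => Y) ∞} :
    g ∈ goodSet y ↔ ∃ a : ℕ → ℝ, Summable (fun n => a n • y n) ∧
      ∀ F : Finset ℕ, (g : ∀ _ : Finset ℕ, Y) F = ∑ n ∈ F, a n • y n := Iff.rfl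

lemma norm_apply_le (g : lp (fun _ : Finset ℕ => Y) ∞) (F : Finset ℕ) :
    ‖(g : ∀ _ : Finset ℕ, Y) F‖ ≤ ‖g‖ :=
  lp.norm_apply_le_norm (by simp) g F

lemma dist_apply_le (g h : lp (fun _ : Finset ℕ => Y) ∞) (F : Finset ℕ) :
    dist ((g : ∀ _ : Finset ℕ, Y) F) ((h : ∀ _ : Finset ℕ, Y) F) ≤ dist g h := by
  rw [dist_eq_norm, dist_eq_norm]
  have := norm_apply_le (g - h) F
  rwa [lp.coeFn_sub, Pi.sub_apply] at this

set_option synthInstance.maxHeartbeats 1000000 in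
set_option maxHeartbeats 1000000 in
lemma goodSet_isClosed [CompleteSpace Y] (y : ℕ → Y) (hy0 : ∀ n, y n ≠ 0) :
    IsClosed ((goodSet y : Set (lp (fun _ : Finset ℕ => Y) ∞))) := by
  rw [← isSeqClosed_iff_isClosed]
  intro h g hmem hlim
  choose b hsum hpart using hmem
  have happly : ∀ (i : ℕ) (F : Finset ℕ),
      (h i : ∀ _ : Finset ℕ, Y) F = ∑ n ∈ F, b i n • y n := hpart
  -- coefficients converge
  have hcoef : ∀ k : ℕ, ∃ c : ℝ, Filter.Tendsto (fun i => b i k) Filter.atTop (𝓝 c) := by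
    intro k
    have hyk : (0:ℝ) < ‖y k‖ := norm_pos_iff.mpr (hy0 k)
    have key : ∀ i j, dist (b i k) (b j k) * ‖y k‖ ≤ dist (h i) (h j) := by
      intro i j
      have e2 := dist_apply_le (h i) (h j) {k}
      rw [happly i {k}, happly j {k}] at e2
      simp only [Finset.sum_singleton] at e2
      rwa [dist_eq_norm, ← sub_smul, norm_smul, Real.norm_eq_abs,
        ← Real.dist_eq] at e2
    have hc : CauchySeq (fun i => b i k) := by
      rw [Metric.cauchySeq_iff]
      intro ε hε
      obtain ⟨N, hN⟩ := Metric.cauchySeq_iff.mp hlim.cauchySeq (ε * ‖y k‖)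
        (by positivity)
      refine ⟨N, fun i hi j hj => ?_⟩
      have h1 := (key i j).trans_lt (hN i hi j hj)
      exact lt_of_mul_lt_mul_right h1 hyk.le
    exact cauchySeq_tendsto_of_complete hc
  choose A hA using hcoef
  -- evaluation convergence
  have hev : ∀ F : Finset ℕ, Filter.Tendsto (fun i => (h i : ∀ _ : Finset ℕ, Y) F)
      Filter.atTop (𝓝 ((g : ∀ _ : Finset ℕ, Y) F)) := by
    intro F
    rw [tendsto_iff_dist_tendsto_zero]
    refine squeeze_zero (fun i => dist_nonneg) (fun i => dist_apply_le (h i) g F) ?_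
    exact tendsto_iff_dist_tendsto_zero.mp hlim
  -- partial sums of limit coefficients
  have hgpart : ∀ F : Finset ℕ, (g : ∀ _ : Finset ℕ, Y) F = ∑ n ∈ F, A n • y n := by
    intro F
    have h2 : Filter.Tendsto (fun i => ∑ n ∈ F, b i n • y n) Filter.atTop
        (𝓝 (∑ n ∈ F, A n • y n)) := by
      refine tendsto_finset_sum F (fun n _ => ?_)
      exact (hA n).smul_const (y n)
    have h3 := hev F
    simp only [happly] at h3
    exact tendsto_nhds_unique h3 h2
  -- summability
  have hAsum : Summable (fun n => A n • y n) := by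
    rw [summable_iff_vanishing]
    intro e he
    obtain ⟨ε, hε, hball⟩ := Metric.mem_nhds_iff.mp he
    obtain ⟨i, hi⟩ : ∃ i, dist (h i) g < ε / 2 := by
      have := Metric.tendsto_atTop.mp hlim (ε/2) (by positivity)
      obtain ⟨N, hN⟩ := this
      exact ⟨N, hN N le_rfl⟩
    obtain ⟨s, hs⟩ := (hsum i).vanishing (Metric.ball_mem_nhds (0 : Y) (by positivity : (0:ℝ) < ε/2))
    refine ⟨s, fun t ht => ?_⟩
    apply hball
    rw [Metric.mem_ball, dist_zero_right]
    have e1 : ∑ n ∈ t, A n • y n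
        = (∑ n ∈ t, b i n • y n) + ((g : ∀ _ : Finset ℕ, Y) t - (h i : ∀ _ : Finset ℕ, Y) t) := by
      rw [hgpart t, happly i t]; abel
    rw [e1]
    have e2 : ‖∑ n ∈ t, b i n • y n‖ < ε / 2 := by
      have := hs t ht
      rwa [Metric.mem_ball, dist_zero_right] at this
    have e3 : ‖(g : ∀ _ : Finset ℕ, Y) t - (h i : ∀ _ : Finset ℕ, Y) t‖ < ε / 2 := by
      have := dist_apply_le g (h i) t
      rw [dist_eq_norm] at this
      calc ‖_‖ ≤ dist g (h i) := this
        _ = dist (h i) g := dist_comm _ _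
        _ < ε / 2 := hi
    calc ‖_ + _‖ ≤ _ + _ := norm_add_le _ _
      _ < ε/2 + ε/2 := add_lt_add e2 e3
      _ = ε := by ring
  exact ⟨A, hAsum, hgpart⟩

end Machinery2

noncomputable section Machinery3
set_option linter.unusedSectionVars false
variable {Y : Type*} [NormedAddCommGroup Y] [NormedSpace ℝ Y]

def gcoeff (y : ℕ → Y) (g : goodSet y) : ℕ → ℝ := ((mem_goodSet_iff y).mp g.2).choose

lemma gcoeff_summable (y : ℕ → Y) (g : goodSet y) :
    Summable (fun n => gcoeff y g n • y n) := ((mem_goodSet_iff y).mp g.2).choose_spec.1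

lemma gcoeff_partial (y : ℕ → Y) (g : goodSet y) (F : Finset ℕ) :
    ((g : lp (fun _ : Finset ℕ => Y) ∞) : ∀ _ : Finset ℕ, Y) F
      = ∑ n ∈ F, gcoeff y g n • y n :=
  ((mem_goodSet_iff y).mp g.2).choose_spec.2 F

def sumFun (y : ℕ → Y) (g : goodSet y) : Y := ∑' n, gcoeff y g n • y n

lemma sumFun_tendsto (y : ℕ → Y) (g : goodSet y) :
    Tendsto (fun F : Finset ℕ => ((g : lp (fun _ : Finset ℕ => Y) ∞) : ∀ _ : Finset ℕ, Y) F)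
      atTop (𝓝 (sumFun y g)) := by
  have h := (gcoeff_summable y g).hasSum
  have e : (fun F : Finset ℕ => ∑ n ∈ F, gcoeff y g n • y n)
      = fun F : Finset ℕ => ((g : lp (fun _ : Finset ℕ => Y) ∞) : ∀ _ : Finset ℕ, Y) F :=
    funext fun F => (gcoeff_partial y g F).symm
  rw [HasSum] at h
  rwa [e] at h

lemma coe_apply_add (y : ℕ → Y) (g h : goodSet y) (F : Finset ℕ) :
    (((g + h : goodSet y) : lp (fun _ : Finset ℕ => Y) ∞) : ∀ _ : Finset ℕ, Y) F
      = ((g : lp (fun _ : Finset ℕ => Y) ∞) : ∀ _ : Finset ℕ, Y) F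
        + ((h : lp (fun _ : Finset ℕ => Y) ∞) : ∀ _ : Finset ℕ, Y) F := by
  have e : ((g + h : goodSet y) : lp (fun _ : Finset ℕ => Y) ∞)
      = (g : lp (fun _ : Finset ℕ => Y) ∞) + (h : lp (fun _ : Finset ℕ => Y) ∞) := rfl
  rw [e, lp.coeFn_add, Pi.add_apply]

lemma coe_apply_smul (y : ℕ → Y) (c : ℝ) (g : goodSet y) (F : Finset ℕ) :
    (((c • g : goodSet y) : lp (fun _ : Finset ℕ => Y) ∞) : ∀ _ : Finset ℕ, Y) F
      = c • ((g : lp (fun _ : Finset ℕ => Y) ∞) : ∀ _ : Finset ℕ, Y) F := by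
  have e : ((c • g : goodSet y) : lp (fun _ : Finset ℕ => Y) ∞)
      = c • (g : lp (fun _ : Finset ℕ => Y) ∞) := rfl
  rw [e, lp.coeFn_smul, Pi.smul_apply]

lemma sumFun_add (y : ℕ → Y) (g h : goodSet y) :
    sumFun y (g + h) = sumFun y g + sumFun y h := by
  refine tendsto_nhds_unique (sumFun_tendsto y (g + h)) ?_
  have := (sumFun_tendsto y g).add (sumFun_tendsto y h)
  convert this using 2
  exact coe_apply_add y g h _

lemma sumFun_smul (y : ℕ → Y) (c : ℝ) (g : goodSet y) :
    sumFun y (c • g) = c • sumFun y g := by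
  refine tendsto_nhds_unique (sumFun_tendsto y (c • g)) ?_
  have := (sumFun_tendsto y g).const_smul c
  convert this using 2
  exact coe_apply_smul y c g _

lemma sumFun_norm_le (y : ℕ → Y) (g : goodSet y) : ‖sumFun y g‖ ≤ ‖g‖ := by
  refine le_of_tendsto' (sumFun_tendsto y g).norm (fun F => ?_)
  exact norm_apply_le _ F

def sumCLM (y : ℕ → Y) : goodSet y →L[ℝ] Y :=
  LinearMap.mkContinuous
    { toFun := sumFun y
      map_add' := sumFun_add y
      map_smul' := sumFun_smul y }
    1 (fun g => by simpa using sumFun_norm_le y g)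

end Machinery3

noncomputable section Machinery4
set_option linter.unusedSectionVars false
set_option maxHeartbeats 1000000
set_option synthInstance.maxHeartbeats 1000000
variable {Y : Type*} [NormedAddCommGroup Y] [NormedSpace ℝ Y]

theorem uncond_proj_bound [CompleteSpace Y] (y : ℕ → Y) (hy : IsUncondBasis y) :
    ∃ K : ℝ, 1 ≤ K ∧ ∀ (x : Y) (a : ℕ → ℝ), HasSum (fun n => a n • y n) x →
      ∀ F : Finset ℕ, ‖∑ n ∈ F, a n • y n‖ ≤ K * ‖x‖ := by
  haveI : CompleteSpace (goodSet y) := (goodSet_isClosed y hy.1).completeSpace_coe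
  set J := sumCLM y with hJdef
  -- the canonical element of goodSet attached to a summable family
  have mkmem : ∀ (a : ℕ → ℝ) (ha : Summable (fun n => a n • y n)),
      (⟨fun F => ∑ n ∈ F, a n • y n, memℓp_partialSums y a ha⟩ :
        lp (fun _ : Finset ℕ => Y) ∞) ∈ goodSet y := by
    intro a ha
    exact (mem_goodSet_iff y).mpr ⟨a, ha, fun F => rfl⟩
  have hJg : ∀ (a : ℕ → ℝ) (ha : Summable (fun n => a n • y n)) (x : Y),
      HasSum (fun n => a n • y n) x →
      J (⟨_, mkmem a ha⟩ : goodSet y) = x := by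
    intro a ha x hx
    have h1 := sumFun_tendsto y (⟨_, mkmem a ha⟩ : goodSet y)
    exact tendsto_nhds_unique h1 hx
  have hker : LinearMap.ker (J : goodSet y →ₗ[ℝ] Y) = ⊥ := by
    rw [LinearMap.ker_eq_bot']
    intro g hg0
    have hsum0 : HasSum (fun n => gcoeff y g n • y n) 0 := by
      have := (gcoeff_summable y g).hasSum
      have eJ : J g = sumFun y g := rfl
      have : HasSum (fun n => gcoeff y g n • y n) (sumFun y g) := this
      have hg0' : J g = 0 := hg0
      rwa [← eJ, hg0'] at this
    have hzero : HasSum (fun n => (0:ℝ) • y n) 0 := by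
      simpa [zero_smul] using (hasSum_zero : HasSum (fun _ : ℕ => (0:Y)) 0)
    obtain ⟨aa, -, hu⟩ := hy.2 0
    have e1 : gcoeff y g = aa := hu _ hsum0
    have e2 : (fun _ : ℕ => (0:ℝ)) = aa := hu _ hzero
    have e3 : gcoeff y g = fun _ => 0 := by rw [e1, ← e2]
    apply Subtype.ext
    apply lp.ext
    funext F
    have := gcoeff_partial y g F
    rw [e3] at this
    simpa using this
  have hrange : LinearMap.range (J : goodSet y →ₗ[ℝ] Y) = ⊤ := by
    rw [LinearMap.range_eq_top]
    intro x
    obtain ⟨a, ha, -⟩ := hy.2 x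
    exact ⟨⟨_, mkmem a ha.summable⟩, hJg a ha.summable x ha⟩
  set E := ContinuousLinearEquiv.ofBijective J hker hrange with hE
  refine ⟨max 1 ‖(E.symm : Y →L[ℝ] goodSet y)‖, le_max_left _ _, ?_⟩
  intro x a hx F
  set g : goodSet y := ⟨_, mkmem a hx.summable⟩ with hg
  have hEg : E g = x := hJg a hx.summable x hx
  have hsymm : E.symm x = g := by rw [← hEg]; exact E.symm_apply_apply g
  have h1 : ‖∑ n ∈ F, a n • y n‖ ≤ ‖g‖ := by
    have := norm_apply_le (g : lp (fun _ : Finset ℕ => Y) ∞) F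
    exact this
  have h2 : ‖g‖ ≤ ‖(E.symm : Y →L[ℝ] goodSet y)‖ * ‖x‖ := by
    rw [← hsymm]
    exact (E.symm : Y →L[ℝ] goodSet y).le_opNorm x
  calc ‖∑ n ∈ F, a n • y n‖ ≤ ‖(E.symm : Y →L[ℝ] goodSet y)‖ * ‖x‖ := h1.trans h2
    _ ≤ max 1 ‖(E.symm : Y →L[ℝ] goodSet y)‖ * ‖x‖ :=
        mul_le_mul_of_nonneg_right (le_max_right _ _) (norm_nonneg x)

end Machinery4


section Sep
variable {X Y : Type*} [NormedAddCommGroup X] [NormedSpace ℝ X] [CompleteSpace X]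
  [NormedAddCommGroup Y] [NormedSpace ℝ Y]

lemma exists_separated (T : Y →L[ℝ] X)
    (hT : ¬ IsCompact (closure (T '' Metric.closedBall 0 1))) :
    ∃ ε : ℝ, 0 < ε ∧ ∃ x : ℕ → Y, (∀ n, ‖x n‖ ≤ 1) ∧
      ∀ m n, m < n → ε ≤ ‖T (x n) - T (x m)‖ := by
  set S := T '' Metric.closedBall 0 1 with hS
  have hTB : ¬ TotallyBounded S := by
    intro h
    exact hT (h.closure.isCompact_of_isClosed isClosed_closure)
  rw [Metric.totallyBounded_iff] at hTB
  push_neg at hTB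
  obtain ⟨ε, hε, hsep⟩ := hTB
  have step : ∀ t : Finset X, ∃ p ∈ S, ∀ q ∈ t, ε ≤ dist p q := by
    intro t
    obtain ⟨p, hpS, hp⟩ := Set.not_subset.mp (hsep t t.finite_toSet)
    refine ⟨p, hpS, fun q hq => ?_⟩
    by_contra hlt
    push_neg at hlt
    exact hp (Set.mem_biUnion hq (Metric.mem_ball.mpr hlt))
  classical
  choose pt hptS hpt using step
  -- recursive construction
  let g : ℕ → Finset X := fun n => Nat.rec ∅ (fun _ s => insert (pt s) s) n
  have hg0 : g 0 = ∅ := rfl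
  have hgsucc : ∀ n, g (n + 1) = insert (pt (g n)) (g n) := fun n => rfl
  have hgmono : ∀ m n, m ≤ n → g m ⊆ g n := by
    intro m n hmn
    induction n with
    | zero => simp at hmn; subst hmn; exact subset_rfl
    | succ k ih =>
      rcases Nat.lt_or_ge m (k+1) with h | h
      · have := ih (Nat.lt_succ_iff.mp h)
        rw [hgsucc k]
        exact this.trans (Finset.subset_insert _ _)
      · have : m = k + 1 := le_antisymm hmn h
        subst this; exact subset_rfl
  set f : ℕ → X := fun n => pt (g n) with hf
  have hfmem : ∀ m n, m < n → f m ∈ g n := by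
    intro m n hmn
    have h1 : f m ∈ g (m+1) := by rw [hgsucc m]; exact Finset.mem_insert_self _ _
    exact hgmono (m+1) n hmn h1
  have hdist : ∀ m n, m < n → ε ≤ dist (f n) (f m) := fun m n hmn =>
    hpt (g n) (f m) (hfmem m n hmn)
  have hmemS : ∀ n, f n ∈ S := fun n => hptS (g n)
  have hx : ∀ n, ∃ v : Y, ‖v‖ ≤ 1 ∧ T v = f n := by
    intro n
    obtain ⟨v, hv, hvT⟩ := hmemS n
    exact ⟨v, by simpa [Metric.mem_closedBall, dist_zero_right] using hv, hvT⟩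
  choose x hx1 hx2 using hx
  refine ⟨ε, hε, x, hx1, fun m n hmn => ?_⟩
  have := hdist m n hmn
  rwa [dist_eq_norm, ← hx2 m, ← hx2 n] at this

end Sep

section BW

lemma exists_pointwise_convergent_subseq (c : ℕ → ℕ → ℝ) (M : ℕ → ℝ)
    (hc : ∀ i k, |c i k| ≤ M k) :
    ∃ φ : ℕ → ℕ, StrictMono φ ∧
      ∀ k, ∃ L : ℝ, Tendsto (fun j => c (φ j) k) atTop (𝓝 L) := by
  set s : Set (ℕ → ℝ) := Set.pi Set.univ (fun k => Set.Icc (-(M k)) (M k)) with hs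
  have hcomp : IsCompact s := isCompact_univ_pi (fun k => isCompact_Icc)
  have hmem : ∀ i, c i ∈ s := by
    intro i k _
    have := hc i k
    rw [abs_le] at this
    exact ⟨this.1, this.2⟩
  obtain ⟨L, hLs, φ, hφ, htend⟩ := hcomp.isSeqCompact hmem
  refine ⟨φ, hφ, fun k => ⟨L k, ?_⟩⟩
  have := tendsto_pi_nhds.mp htend k
  exact this

end BW


section Helpers
variable {Y : Type*} [NormedAddCommGroup Y] [NormedSpace ℝ Y]

lemma sum_Ioc_eq_sub' (f : ℕ → Y) {a b : ℕ} (hab : a ≤ b) :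
    ∑ n ∈ Finset.Ioc a b, f n
      = (∑ n ∈ Finset.range (b+1), f n) - ∑ n ∈ Finset.range (a+1), f n := by
  rw [eq_sub_iff_add_eq, Finset.range_eq_Ico]
  have h1 : Finset.Ioc a b = Finset.Ico (a+1) (b+1) := by
    ext n; simp [Nat.lt_succ_iff, Nat.succ_le_iff]
  rw [h1, add_comm, Finset.range_eq_Ico]
  exact Finset.sum_Ico_consecutive f (Nat.zero_le _) (Nat.succ_le_succ hab)

lemma sum_geom_two_finset (s : Finset ℕ) : (∑ j ∈ s, ((1:ℝ)/2)^j) ≤ 2 := by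
  classical
  obtain ⟨n, hn⟩ : ∃ n, s ⊆ Finset.range n := ⟨(s.sup id) + 1, fun x hx =>
    Finset.mem_range.mpr (Nat.lt_succ_of_le (Finset.le_sup (f := id) hx))⟩
  calc (∑ j ∈ s, ((1:ℝ)/2)^j) ≤ ∑ j ∈ Finset.range n, ((1:ℝ)/2)^j :=
        Finset.sum_le_sum_of_subset_of_nonneg hn (fun i _ _ => by positivity)
    _ ≤ 2 := sum_geometric_two_le n

/-- Bridging: estimates over `Fin m` families apply to finset-indexed families. -/
lemma finset_to_fin_est (y : ℕ → Y) (q : ℝ) (C : ℝ)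
    (s : Finset ℕ) (w : ℕ → Y) (B : ℕ → Finset ℕ)
    (hB : Pairwise (Function.onFun Disjoint B))
    (hw : ∀ j, w j ∈ Submodule.span ℝ (y '' (B j : Set ℕ)))
    (hEst : ∀ (m : ℕ) (f : Fin m → Y) (A : Fin m → Finset ℕ),
      Pairwise (Function.onFun Disjoint A) →
      (∀ i, f i ∈ Submodule.span ℝ (y '' (A i : Set ℕ))) →
      ‖∑ i, f i‖ ≤ C * (∑ i, ‖f i‖ ^ q) ^ (1/q)) :
    ‖∑ j ∈ s, w j‖ ≤ C * (∑ j ∈ s, ‖w j‖ ^ q) ^ (1/q) := by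
  classical
  set σ := s.orderIsoOfFin rfl with hσ
  have hsum1 : ∑ i : Fin s.card, w (σ i) = ∑ j ∈ s, w j := by
    rw [← Finset.sum_coe_sort s w]
    exact Equiv.sum_comp σ.toEquiv (fun x : s => w x)
  have hsum2 : ∑ i : Fin s.card, ‖w (σ i)‖ ^ q = ∑ j ∈ s, ‖w j‖ ^ q := by
    rw [← Finset.sum_coe_sort s (fun j => ‖w j‖ ^ q)]
    exact Equiv.sum_comp σ.toEquiv (fun x : s => ‖w (x:ℕ)‖ ^ q)
  rw [← hsum1, ← hsum2]
  refine hEst s.card (fun i => w (σ i)) (fun i => B (σ i)) ?_ (fun i => hw _)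
  intro i j hij
  have : ((σ i : s) : ℕ) ≠ ((σ j : s) : ℕ) := by
    intro hcontra
    exact hij (σ.injective (Subtype.ext hcontra))
  exact hB this

lemma finset_to_fin_est_lower (y : ℕ → Y) (q : ℝ) (C : ℝ)
    (s : Finset ℕ) (w : ℕ → Y) (B : ℕ → Finset ℕ)
    (hB : Pairwise (Function.onFun Disjoint B))
    (hw : ∀ j, w j ∈ Submodule.span ℝ (y '' (B j : Set ℕ)))
    (hEst : ∀ (m : ℕ) (f : Fin m → Y) (A : Fin m → Finset ℕ),
      Pairwise (Function.onFun Disjoint A) →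
      (∀ i, f i ∈ Submodule.span ℝ (y '' (A i : Set ℕ))) →
      (∑ i, ‖f i‖ ^ q) ^ (1/q) ≤ C * ‖∑ i, f i‖) :
    (∑ j ∈ s, ‖w j‖ ^ q) ^ (1/q) ≤ C * ‖∑ j ∈ s, w j‖ := by
  classical
  set σ := s.orderIsoOfFin rfl with hσ
  have hsum1 : ∑ i : Fin s.card, w (σ i) = ∑ j ∈ s, w j := by
    rw [← Finset.sum_coe_sort s w]
    exact Equiv.sum_comp σ.toEquiv (fun x : s => w x)
  have hsum2 : ∑ i : Fin s.card, ‖w (σ i)‖ ^ q = ∑ j ∈ s, ‖w j‖ ^ q := by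
    rw [← Finset.sum_coe_sort s (fun j => ‖w j‖ ^ q)]
    exact Equiv.sum_comp σ.toEquiv (fun x : s => ‖w (x:ℕ)‖ ^ q)
  rw [← hsum1, ← hsum2]
  refine hEst s.card (fun i => w (σ i)) (fun i => B (σ i)) ?_ (fun i => hw _)
  intro i j hij
  have : ((σ i : s) : ℕ) ≠ ((σ j : s) : ℕ) := by
    intro hcontra
    exact hij (σ.injective (Subtype.ext hcontra))
  exact hB this

end Helpers

end AuxiliaryMachinery

section Combine
open scoped BigOperators
lemma rpow_self_inv {c : ℝ} (hc : 0 ≤ c) {q : ℝ} (hq : q ≠ 0) : (c ^ q) ^ (1/q) = c := by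
  rw [← Real.rpow_mul hc, mul_one_div_cancel hq, Real.rpow_one]
end Combine

section MainWork
open scoped BigOperators Topology
open Filter

lemma combine_equiv {Z : Type*} [NormedAddCommGroup Z] [NormedSpace ℝ Z]
    (q : ℝ) (w : ℕ → Z) (c1 c2 : ℝ) (hc1 : 0 < c1)
    (hlow : ∀ (a : ℕ → ℝ) (s : Finset ℕ),
      c1 * (∑ j ∈ s, |a j| ^ q) ^ (1/q) ≤ ‖∑ j ∈ s, a j • w j‖)
    (hup : ∀ (a : ℕ → ℝ) (s : Finset ℕ),
      ‖∑ j ∈ s, a j • w j‖ ≤ c2 * (∑ j ∈ s, |a j| ^ q) ^ (1/q)) :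
    EquivCanonLq w q := by
  refine ⟨max (max 1 c2) (1/c1), le_trans (le_max_left 1 c2) (le_max_left _ _),
    fun a s => ?_⟩
  have hσ : (0:ℝ) ≤ (∑ j ∈ s, |a j| ^ q) ^ (1/q) :=
    Real.rpow_nonneg (Finset.sum_nonneg fun j _ => Real.rpow_nonneg (abs_nonneg _) _) _
  constructor
  · have hinv : (max (max 1 c2) (1/c1))⁻¹ ≤ c1 := by
      rw [inv_eq_one_div]
      have h2 := one_div_le_one_div_of_le (by positivity : (0:ℝ) < 1/c1)
        (le_max_right (max 1 c2) (1/c1))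
      simpa using h2
    calc (max (max 1 c2) (1/c1))⁻¹ * (∑ j ∈ s, |a j| ^ q) ^ (1/q)
        ≤ c1 * (∑ j ∈ s, |a j| ^ q) ^ (1/q) := mul_le_mul_of_nonneg_right hinv hσ
      _ ≤ _ := hlow a s
  · calc ‖∑ j ∈ s, a j • w j‖ ≤ c2 * (∑ j ∈ s, |a j| ^ q) ^ (1/q) := hup a s
      _ ≤ _ := mul_le_mul_of_nonneg_right
          (le_trans (le_max_right 1 c2) (le_max_left _ _)) hσ

end MainWork

open scoped BigOperators Topology
open Filter
set_option maxHeartbeats 4000000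
set_option synthInstance.maxHeartbeats 1000000

theorem statement5 {X Y : Type*} [NormedAddCommGroup X] [NormedSpace ℝ X] [CompleteSpace X]
    [NormedAddCommGroup Y] [NormedSpace ℝ Y] [CompleteSpace Y]
    (q : ℝ) (hq : 1 ≤ q)
    (e : ℕ → X) (he : IsUncondBasis e) (hlow : LowerEstimate e q)
    (y : ℕ → Y) (hy : IsUncondBasis y) (hup : UpperEstimate y q)
    (T : Y →L[ℝ] X) (hT : ¬ CompactOp T) :
    ∃ (v : ℕ → Y) (u : ℕ → X), DisjSupported y v ∧ DisjSupported e u ∧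
      EquivCanonLq u q ∧ EquivCanonLq v q ∧ EquivCanonLq (fun j => T (v j)) q := by
  classical
  obtain ⟨CX, hCXpos, hCXest⟩ := hlow
  obtain ⟨CY, hCYpos, hCYest⟩ := hup
  obtain ⟨KX, hKX1, hKX⟩ := uncond_proj_bound e he
  obtain ⟨KY, hKY1, hKY⟩ := uncond_proj_bound y hy
  have hq0 : (0:ℝ) < q := lt_of_lt_of_le one_pos hq
  have hqne : q ≠ 0 := ne_of_gt hq0
  have hinvq : (0:ℝ) < 1/q := by positivity
  -- coefficient functionals
  choose cX hcX hcXu using he.2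
  choose cY hcY hcYu using hy.2
  have hcX_sub : ∀ w w' : X, cX (w - w') = cX w - cX w' := by
    intro w w'
    have hs : HasSum (fun n => (cX w n - cX w' n) • e n) (w - w') := by
      simpa [sub_smul] using (hcX w).sub (hcX w')
    have h2 := hcXu (w - w') _ hs
    rw [← h2]; funext n; simp
  have hcY_sub : ∀ w w' : Y, cY (w - w') = cY w - cY w' := by
    intro w w'
    have hs : HasSum (fun n => (cY w n - cY w' n) • y n) (w - w') := by
      simpa [sub_smul] using (hcY w).sub (hcY w')
    have h2 := hcYu (w - w') _ hs
    rw [← h2]; funext n; simp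
  -- coefficient bounds
  have hcXbound : ∀ (w : X) (k : ℕ), |cX w k| * ‖e k‖ ≤ KX * ‖w‖ := by
    intro w k
    have h1 := hKX w (cX w) (hcX w) {k}
    simpa [norm_smul, Real.norm_eq_abs] using h1
  have hcYbound : ∀ (w : Y) (k : ℕ), |cY w k| * ‖y k‖ ≤ KY * ‖w‖ := by
    intro w k
    have h1 := hKY w (cY w) (hcY w) {k}
    simpa [norm_smul, Real.norm_eq_abs] using h1
  -- tails
  have htailX : ∀ (w : X) (δ : ℝ), 0 < δ → ∃ N₀, ∀ N ≥ N₀,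
      ‖w - ∑ n ∈ Finset.range N, cX w n • e n‖ ≤ δ := by
    intro w δ hδ
    have ht := (hcX w).tendsto_sum_nat
    rw [Metric.tendsto_atTop] at ht
    obtain ⟨N₀, hN₀⟩ := ht δ hδ
    refine ⟨N₀, fun N hN => ?_⟩
    have h2 := hN₀ N hN
    rw [dist_eq_norm, norm_sub_rev] at h2
    exact h2.le
  have htailY : ∀ (w : Y) (δ : ℝ), 0 < δ → ∃ N₀, ∀ N ≥ N₀,
      ‖w - ∑ n ∈ Finset.range N, cY w n • y n‖ ≤ δ := by
    intro w δ hδ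
    have ht := (hcY w).tendsto_sum_nat
    rw [Metric.tendsto_atTop] at ht
    obtain ⟨N₀, hN₀⟩ := ht δ hδ
    refine ⟨N₀, fun N hN => ?_⟩
    have h2 := hN₀ N hN
    rw [dist_eq_norm, norm_sub_rev] at h2
    exact h2.le
  -- separated sequence
  obtain ⟨ε, hεpos, x, hx1, hsep⟩ := exists_separated T hT
  -- operator norm positive
  have hTpos : 0 < ‖T‖ := by
    have h01 := hsep 0 1 (by norm_num)
    have h4 : ‖x 1 - x 0‖ ≤ 2 := (norm_sub_le _ _).trans (by linarith [hx1 0, hx1 1])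
    have h3 : ‖T (x 1 - x 0)‖ ≤ ‖T‖ * ‖x 1 - x 0‖ := T.le_opNorm _
    have h2 : ε ≤ ‖T‖ * 2 := by
      rw [← map_sub] at h01
      nlinarith [norm_nonneg T]
    nlinarith
  -- Bolzano–Weierstrass diagonal subsequences
  have hxTnorm : ∀ i, ‖T (x i)‖ ≤ ‖T‖ := by
    intro i
    have h2 : ‖T (x i)‖ ≤ ‖T‖ * ‖x i‖ := T.le_opNorm _
    nlinarith [hx1 i, norm_nonneg (x i)]
  obtain ⟨φ1, hφ1mono, hφ1lim⟩ := exists_pointwise_convergent_subseq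
      (fun i k => cX (T (x i)) k) (fun k => KX * ‖T‖ / ‖e k‖) (by
        intro i k
        have hek : (0:ℝ) < ‖e k‖ := norm_pos_iff.mpr (he.1 k)
        rw [le_div_iff₀ hek]
        calc |cX (T (x i)) k| * ‖e k‖ ≤ KX * ‖T (x i)‖ := hcXbound _ k
          _ ≤ KX * ‖T‖ := by nlinarith [hxTnorm i])
  obtain ⟨φ2, hφ2mono, hφ2lim⟩ := exists_pointwise_convergent_subseq
      (fun j k => cY (x (φ1 j)) k) (fun k => KY / ‖y k‖) (by
        intro j k
        have hyk : (0:ℝ) < ‖y k‖ := norm_pos_iff.mpr (hy.1 k)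
        rw [le_div_iff₀ hyk]
        calc |cY (x (φ1 j)) k| * ‖y k‖ ≤ KY * ‖x (φ1 j)‖ := hcYbound _ k
          _ ≤ KY := by nlinarith [hx1 (φ1 j), norm_nonneg (x (φ1 j))])
  set ψ : ℕ → ℕ := φ1 ∘ φ2 with hψdef
  have hψmono : StrictMono ψ := hφ1mono.comp hφ2mono
  have hlimX : ∀ k, ∃ L : ℝ, Tendsto (fun j => cX (T (x (ψ j))) k) atTop (𝓝 L) := by
    intro k
    obtain ⟨L, hL⟩ := hφ1lim k
    exact ⟨L, hL.comp hφ2mono.tendsto_atTop⟩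
  have hlimY : ∀ k, ∃ L : ℝ, Tendsto (fun j => cY (x (ψ j)) k) atTop (𝓝 L) := hφ2lim
  -- differences
  set ζ : ℕ → Y := fun j => x (ψ (2*j+1)) - x (ψ (2*j)) with hζdef
  set d : ℕ → X := fun j => T (x (ψ (2*j+1))) - T (x (ψ (2*j))) with hddef
  have hdζ : ∀ j, d j = T (ζ j) := by
    intro j; rw [hζdef, hddef]; simp [map_sub]
  have hζ2 : ∀ j, ‖ζ j‖ ≤ 2 := by
    intro j
    exact (norm_sub_le _ _).trans (by linarith [hx1 (ψ (2*j+1)), hx1 (ψ (2*j))])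
  have hdlow : ∀ j, ε ≤ ‖d j‖ := by
    intro j
    exact hsep _ _ (hψmono (by omega))
  have hdupp : ∀ j, ‖d j‖ ≤ 2*‖T‖ := by
    intro j
    rw [hdζ j]
    calc ‖T (ζ j)‖ ≤ ‖T‖ * ‖ζ j‖ := T.le_opNorm _
      _ ≤ 2*‖T‖ := by nlinarith [hζ2 j, norm_nonneg T]
  have hmono2 : StrictMono (fun j : ℕ => 2*j+1) := by
    intro a b hab; show 2*a+1 < 2*b+1; omega
  have hmono2' : StrictMono (fun j : ℕ => 2*j) := by
    intro a b hab; show 2*a < 2*b; omega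
  have hvanX : ∀ k, Tendsto (fun j => cX (d j) k) atTop (𝓝 0) := by
    intro k
    obtain ⟨L, hL⟩ := hlimX k
    have t1 : Tendsto (fun j => cX (T (x (ψ (2*j+1)))) k) atTop (𝓝 L) :=
      hL.comp hmono2.tendsto_atTop
    have t2 : Tendsto (fun j => cX (T (x (ψ (2*j)))) k) atTop (𝓝 L) :=
      hL.comp hmono2'.tendsto_atTop
    have e1 : ∀ j, cX (d j) k
        = cX (T (x (ψ (2*j+1)))) k - cX (T (x (ψ (2*j)))) k := by
      intro j
      rw [hddef]
      simp only []
      rw [hcX_sub]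
      simp
    have := t1.sub t2
    rw [sub_self] at this
    simpa [e1] using this
  have hvanY : ∀ k, Tendsto (fun j => cY (ζ j) k) atTop (𝓝 0) := by
    intro k
    obtain ⟨L, hL⟩ := hlimY k
    have t1 : Tendsto (fun j => cY (x (ψ (2*j+1))) k) atTop (𝓝 L) :=
      hL.comp hmono2.tendsto_atTop
    have t2 : Tendsto (fun j => cY (x (ψ (2*j))) k) atTop (𝓝 L) :=
      hL.comp hmono2'.tendsto_atTop
    have e1 : ∀ j, cY (ζ j) k
        = cY (x (ψ (2*j+1))) k - cY (x (ψ (2*j))) k := by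
      intro j
      rw [hζdef]
      simp only []
      rw [hcY_sub]
      simp
    have := t1.sub t2
    rw [sub_self] at this
    simpa [e1] using this
  -- heads vanish
  have hheads : ∀ (N : ℕ) (δ : ℝ), 0 < δ → ∃ j₀, ∀ j ≥ j₀,
      ‖∑ n ∈ Finset.range N, cY (ζ j) n • y n‖ ≤ δ ∧
      ‖∑ n ∈ Finset.range N, cX (d j) n • e n‖ ≤ δ := by
    intro N δ hδ
    have tY : Tendsto (fun j => ∑ n ∈ Finset.range N, cY (ζ j) n • y n) atTop
        (𝓝 0) := by
      have h2 : Tendsto (fun j => ∑ n ∈ Finset.range N, cY (ζ j) n • y n) atTop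
          (𝓝 (∑ n ∈ Finset.range N, (0:ℝ) • y n)) :=
        tendsto_finset_sum _ (fun n _ => (hvanY n).smul_const (y n))
      simpa using h2
    have tX : Tendsto (fun j => ∑ n ∈ Finset.range N, cX (d j) n • e n) atTop
        (𝓝 0) := by
      have h2 : Tendsto (fun j => ∑ n ∈ Finset.range N, cX (d j) n • e n) atTop
          (𝓝 (∑ n ∈ Finset.range N, (0:ℝ) • e n)) :=
        tendsto_finset_sum _ (fun n _ => (hvanX n).smul_const (e n))
      simpa using h2
    rw [Metric.tendsto_atTop] at tY tX
    obtain ⟨j1, hj1⟩ := tY δ hδ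
    obtain ⟨j2, hj2⟩ := tX δ hδ
    refine ⟨max j1 j2, fun j hj => ⟨?_, ?_⟩⟩
    · have := hj1 j (le_trans (le_max_left _ _) hj)
      rw [dist_zero_right] at this
      exact this.le
    · have := hj2 j (le_trans (le_max_right _ _) hj)
      rw [dist_zero_right] at this
      exact this.le
  -- tolerances
  set δ0 : ℝ := min (1/2) (min (ε/4) (ε/(16*CX*(‖T‖+1)))) with hδ0def
  have hδ0pos : 0 < δ0 := by
    refine lt_min (by norm_num) (lt_min (by positivity) (by positivity))
  have hδ0a : δ0 ≤ 1/2 := min_le_left _ _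
  have hδ0b : δ0 ≤ ε/4 := le_trans (min_le_right _ _) (min_le_left _ _)
  have hδ0c : δ0 ≤ ε/(16*CX*(‖T‖+1)) :=
    le_trans (min_le_right _ _) (min_le_right _ _)
  set τ : ℕ → ℝ := fun j => δ0 * (1/2)^j with hτdef
  have hτpos : ∀ j, 0 < τ j := fun j => by
    rw [hτdef]; positivity
  have hτle : ∀ j, τ j ≤ δ0 := by
    intro j
    rw [hτdef]
    calc δ0 * (1/2:ℝ)^j ≤ δ0 * 1 := by
          refine mul_le_mul_of_nonneg_left ?_ hδ0pos.le
          exact pow_le_one₀ (by norm_num) (by norm_num)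
      _ = δ0 := mul_one δ0
  -- recursion step
  have key : ∀ (j N : ℕ), ∃ p : ℕ × ℕ, N < p.2 ∧
      ‖∑ n ∈ Finset.range (N+1), cY (ζ p.1) n • y n‖ ≤ τ j ∧
      ‖∑ n ∈ Finset.range (N+1), cX (d p.1) n • e n‖ ≤ τ j ∧
      ‖ζ p.1 - ∑ n ∈ Finset.range (p.2+1), cY (ζ p.1) n • y n‖ ≤ τ j ∧
      ‖d p.1 - ∑ n ∈ Finset.range (p.2+1), cX (d p.1) n • e n‖ ≤ τ j := by
    intro j N
    obtain ⟨j₀, hj₀⟩ := hheads (N+1) (τ j) (hτpos j)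
    obtain ⟨h1, h2⟩ := hj₀ j₀ le_rfl
    obtain ⟨N1, hN1⟩ := htailY (ζ j₀) (τ j) (hτpos j)
    obtain ⟨N2, hN2⟩ := htailX (d j₀) (τ j) (hτpos j)
    refine ⟨(j₀, max (N+1) (max N1 N2)), ?_, h1, h2, ?_, ?_⟩
    · exact lt_of_lt_of_le (Nat.lt_succ_self N) (le_max_left _ _)
    · exact hN1 _ (((le_max_left N1 N2).trans (le_max_right _ _)).trans (Nat.le_succ _))
    · exact hN2 _ (((le_max_right N1 N2).trans (le_max_right _ _)).trans (Nat.le_succ _))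
  choose step hstep_lt hstep_hY hstep_hX hstep_tY hstep_tX using key
  set G : ℕ → ℕ := fun j => Nat.rec 0 (fun j' N => (step j' N).2) j with hGdef
  have hGs : ∀ j, G (j+1) = (step j (G j)).2 := fun j => rfl
  set mj : ℕ → ℕ := fun j => (step j (G j)).1 with hmjdef
  have hGlt : ∀ j, G j < G (j+1) := fun j => by
    rw [hGs]; exact hstep_lt j (G j)
  have hGmono : StrictMono G := strictMono_nat_of_lt_succ hGlt
  set A : ℕ → Finset ℕ := fun j => Finset.Ioc (G j) (G (j+1)) with hAdef
  set v : ℕ → Y := fun j => ∑ n ∈ A j, cY (ζ (mj j)) n • y n with hvdef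
  set u : ℕ → X := fun j => ∑ n ∈ A j, cX (d (mj j)) n • e n with hudef
  -- perturbation estimates
  have hvζ : ∀ j, ‖ζ (mj j) - v j‖ ≤ 2 * τ j := by
    intro j
    have hsplit := sum_Ioc_eq_sub' (fun n => cY (ζ (mj j)) n • y n) (hGlt j).le
    have e1 : ζ (mj j) - v j
        = (ζ (mj j) - ∑ n ∈ Finset.range (G (j+1)+1), cY (ζ (mj j)) n • y n)
          + ∑ n ∈ Finset.range (G j+1), cY (ζ (mj j)) n • y n := by
      rw [hvdef]; simp only [hAdef]; rw [hsplit]; abel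
    rw [e1]
    have t1 := hstep_tY j (G j)
    have t2 := hstep_hY j (G j)
    rw [← hGs j] at t1
    calc ‖_ + _‖ ≤ _ + _ := norm_add_le _ _
      _ ≤ τ j + τ j := add_le_add t1 t2
      _ = 2 * τ j := by ring
  have hud : ∀ j, ‖d (mj j) - u j‖ ≤ 2 * τ j := by
    intro j
    have hsplit := sum_Ioc_eq_sub' (fun n => cX (d (mj j)) n • e n) (hGlt j).le
    have e1 : d (mj j) - u j
        = (d (mj j) - ∑ n ∈ Finset.range (G (j+1)+1), cX (d (mj j)) n • e n)
          + ∑ n ∈ Finset.range (G j+1), cX (d (mj j)) n • e n := by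
      rw [hudef]; simp only [hAdef]; rw [hsplit]; abel
    rw [e1]
    have t1 := hstep_tX j (G j)
    have t2 := hstep_hX j (G j)
    rw [← hGs j] at t1
    calc ‖_ + _‖ ≤ _ + _ := norm_add_le _ _
      _ ≤ τ j + τ j := add_le_add t1 t2
      _ = 2 * τ j := by ring
  have hTvu : ∀ j, ‖T (v j) - u j‖ ≤ 2 * τ j * (‖T‖ + 1) := by
    intro j
    have e1 : T (v j) - u j = T (v j - ζ (mj j)) + (d (mj j) - u j) := by
      rw [map_sub, hdζ]; abel
    rw [e1]
    have t1 : ‖T (v j - ζ (mj j))‖ ≤ ‖T‖ * (2 * τ j) := by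
      calc ‖T (v j - ζ (mj j))‖ ≤ ‖T‖ * ‖v j - ζ (mj j)‖ := T.le_opNorm _
        _ ≤ ‖T‖ * (2 * τ j) := by
            have := hvζ j
            rw [norm_sub_rev] at this
            nlinarith [norm_nonneg T]
    calc ‖_ + _‖ ≤ _ + _ := norm_add_le _ _
      _ ≤ ‖T‖ * (2 * τ j) + 2 * τ j := add_le_add t1 (hud j)
      _ = 2 * τ j * (‖T‖ + 1) := by ring
  -- norm bounds
  have hvnorm : ∀ j, ‖v j‖ ≤ 3 := by
    intro j
    have h2 : ‖v j‖ ≤ ‖ζ (mj j)‖ + ‖ζ (mj j) - v j‖ := by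
      calc ‖v j‖ = ‖ζ (mj j) - (ζ (mj j) - v j)‖ := by rw [sub_sub_cancel]
        _ ≤ ‖ζ (mj j)‖ + ‖ζ (mj j) - v j‖ := norm_sub_le _ _
    have := hτle j
    have := hvζ j
    have := hζ2 (mj j)
    linarith
  have hunorm_low : ∀ j, ε/2 ≤ ‖u j‖ := by
    intro j
    have h2 : ‖d (mj j)‖ - ‖d (mj j) - u j‖ ≤ ‖u j‖ := by
      have := norm_sub_norm_le (d (mj j)) (u j)
      have h3 : ‖d (mj j)‖ - ‖u j‖ ≤ ‖d (mj j) - u j‖ := this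
      linarith
    have := hud j
    have := hτle j
    have := hdlow (mj j)
    linarith
  have hunorm_up : ∀ j, ‖u j‖ ≤ 2*‖T‖ + 1 := by
    intro j
    have h2 : ‖u j‖ ≤ ‖d (mj j)‖ + ‖d (mj j) - u j‖ := by
      calc ‖u j‖ = ‖d (mj j) - (d (mj j) - u j)‖ := by rw [sub_sub_cancel]
        _ ≤ ‖d (mj j)‖ + ‖d (mj j) - u j‖ := norm_sub_le _ _
    have := hud j
    have := hτle j
    have := hdupp (mj j)
    linarith
  -- disjointness
  have hdisj : Pairwise (Function.onFun Disjoint A) := by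
    have hcore : ∀ i j, i < j → Disjoint (A i) (A j) := by
      intro i j hij
      rw [Finset.disjoint_left]
      intro n hni hnj
      simp only [hAdef, Finset.mem_Ioc] at hni hnj
      have hGle : G (i+1) ≤ G j := hGmono.monotone (Nat.succ_le_of_lt hij)
      omega
    intro i j hij
    rcases lt_or_gt_of_ne hij with h | h
    · exact hcore i j h
    · exact (hcore j i h).symm
  have hvmem : ∀ j, v j ∈ Submodule.span ℝ (y '' ((A j : Finset ℕ) : Set ℕ)) := by
    intro j
    rw [hvdef]
    refine Submodule.sum_mem _ (fun n hn => ?_)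
    exact Submodule.smul_mem _ _ (Submodule.subset_span
      (Set.mem_image_of_mem y (by exact_mod_cast hn)))
  have humem : ∀ j, u j ∈ Submodule.span ℝ (e '' ((A j : Finset ℕ) : Set ℕ)) := by
    intro j
    rw [hudef]
    refine Submodule.sum_mem _ (fun n hn => ?_)
    exact Submodule.smul_mem _ _ (Submodule.subset_span
      (Set.mem_image_of_mem e (by exact_mod_cast hn)))
  -- basic σ facts
  have hσnonneg : ∀ (a : ℕ → ℝ) (s : Finset ℕ),
      (0:ℝ) ≤ (∑ j ∈ s, |a j| ^ q) ^ (1/q) := fun a s =>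
    Real.rpow_nonneg (Finset.sum_nonneg fun j _ => Real.rpow_nonneg (abs_nonneg _) _) _
  have hsum_nonneg : ∀ (a : ℕ → ℝ) (s : Finset ℕ),
      (0:ℝ) ≤ ∑ j ∈ s, |a j| ^ q := fun a s =>
    Finset.sum_nonneg fun j _ => Real.rpow_nonneg (abs_nonneg _) _
  have habsle : ∀ (a : ℕ → ℝ) (s : Finset ℕ), ∀ j ∈ s,
      |a j| ≤ (∑ i ∈ s, |a i| ^ q) ^ (1/q) := by
    intro a s j hj
    have h1 : |a j| ^ q ≤ ∑ i ∈ s, |a i| ^ q :=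
      Finset.single_le_sum (f := fun i => |a i| ^ q)
        (fun i _ => Real.rpow_nonneg (abs_nonneg _) _) hj
    have h2 : (|a j| ^ q) ^ (1/q) ≤ (∑ i ∈ s, |a i| ^ q) ^ (1/q) :=
      Real.rpow_le_rpow (Real.rpow_nonneg (abs_nonneg _) _) h1 hinvq.le
    rwa [rpow_self_inv (abs_nonneg _) hqne] at h2
  -- scaling lemma for rpow sums
  have hscale : ∀ (a : ℕ → ℝ) (s : Finset ℕ) (c : ℝ), 0 ≤ c →
      (∑ j ∈ s, (c * |a j|) ^ q) ^ (1/q)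
        = c * (∑ j ∈ s, |a j| ^ q) ^ (1/q) := by
    intro a s c hc
    have h1 : ∀ j ∈ s, (c * |a j|) ^ q = c ^ q * |a j| ^ q := fun j _ =>
      Real.mul_rpow hc (abs_nonneg _)
    rw [Finset.sum_congr rfl h1, ← Finset.mul_sum,
      Real.mul_rpow (Real.rpow_nonneg hc _) (hsum_nonneg a s),
      rpow_self_inv hc hqne]
  -- ESTIMATE: upper for v
  have Euv : ∀ (a : ℕ → ℝ) (s : Finset ℕ),
      ‖∑ j ∈ s, a j • v j‖ ≤ (3*CY) * (∑ j ∈ s, |a j| ^ q) ^ (1/q) := by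
    intro a s
    have h1 := finset_to_fin_est y q CY s (fun j => a j • v j) A hdisj
      (fun j => Submodule.smul_mem _ _ (hvmem j)) hCYest
    have h2 : (∑ j ∈ s, ‖a j • v j‖ ^ q) ^ (1/q)
        ≤ 3 * (∑ j ∈ s, |a j| ^ q) ^ (1/q) := by
      have h3 : ∀ j ∈ s, ‖a j • v j‖ ^ q ≤ (3 * |a j|) ^ q := by
        intro j hj
        refine Real.rpow_le_rpow (norm_nonneg _) ?_ hq0.le
        rw [norm_smul, Real.norm_eq_abs]
        calc |a j| * ‖v j‖ ≤ |a j| * 3 := by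
              exact mul_le_mul_of_nonneg_left (hvnorm j) (abs_nonneg _)
          _ = 3 * |a j| := by ring
      have h4 : ∑ j ∈ s, ‖a j • v j‖ ^ q ≤ ∑ j ∈ s, (3 * |a j|) ^ q :=
        Finset.sum_le_sum h3
      have h5 : (∑ j ∈ s, ‖a j • v j‖ ^ q) ^ (1/q)
          ≤ (∑ j ∈ s, (3 * |a j|) ^ q) ^ (1/q) :=
        Real.rpow_le_rpow (Finset.sum_nonneg fun j _ =>
          Real.rpow_nonneg (norm_nonneg _) _) h4 hinvq.le
      rwa [hscale a s 3 (by norm_num)] at h5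
    calc ‖∑ j ∈ s, a j • v j‖ ≤ CY * (∑ j ∈ s, ‖a j • v j‖ ^ q) ^ (1/q) := h1
      _ ≤ CY * (3 * (∑ j ∈ s, |a j| ^ q) ^ (1/q)) :=
          mul_le_mul_of_nonneg_left h2 hCYpos.le
      _ = (3*CY) * (∑ j ∈ s, |a j| ^ q) ^ (1/q) := by ring
  -- ESTIMATE: lower for u
  have Elu : ∀ (a : ℕ → ℝ) (s : Finset ℕ),
      (ε/(2*CX)) * (∑ j ∈ s, |a j| ^ q) ^ (1/q) ≤ ‖∑ j ∈ s, a j • u j‖ := by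
    intro a s
    have h1 := finset_to_fin_est_lower e q CX s (fun j => a j • u j) A hdisj
      (fun j => Submodule.smul_mem _ _ (humem j)) hCXest
    have h2 : (ε/2) * (∑ j ∈ s, |a j| ^ q) ^ (1/q)
        ≤ (∑ j ∈ s, ‖a j • u j‖ ^ q) ^ (1/q) := by
      have h3 : ∀ j ∈ s, ((ε/2) * |a j|) ^ q ≤ ‖a j • u j‖ ^ q := by
        intro j hj
        refine Real.rpow_le_rpow (by positivity) ?_ hq0.le
        rw [norm_smul, Real.norm_eq_abs]
        calc (ε/2) * |a j| = |a j| * (ε/2) := by ring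
          _ ≤ |a j| * ‖u j‖ :=
              mul_le_mul_of_nonneg_left (hunorm_low j) (abs_nonneg _)
      have h4 : ∑ j ∈ s, ((ε/2) * |a j|) ^ q ≤ ∑ j ∈ s, ‖a j • u j‖ ^ q :=
        Finset.sum_le_sum h3
      have h5 : (∑ j ∈ s, ((ε/2) * |a j|) ^ q) ^ (1/q)
          ≤ (∑ j ∈ s, ‖a j • u j‖ ^ q) ^ (1/q) :=
        Real.rpow_le_rpow (Finset.sum_nonneg fun j _ =>
          Real.rpow_nonneg (by positivity) _) h4 hinvq.le
      rwa [hscale a s (ε/2) (by positivity)] at h5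
    have h6 : (ε/2) * (∑ j ∈ s, |a j| ^ q) ^ (1/q) ≤ CX * ‖∑ j ∈ s, a j • u j‖ :=
      le_trans h2 h1
    rw [div_mul_eq_mul_div, div_le_iff₀ (by positivity : (0:ℝ) < 2*CX)]
    calc ε * (∑ j ∈ s, |a j| ^ q) ^ (1/q)
        = 2 * ((ε/2) * (∑ j ∈ s, |a j| ^ q) ^ (1/q)) := by ring
      _ ≤ 2 * (CX * ‖∑ j ∈ s, a j • u j‖) := by linarith
      _ = ‖∑ j ∈ s, a j • u j‖ * (2*CX) := by ring
  -- ESTIMATE: perturbation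
  have Epert : ∀ (a : ℕ → ℝ) (s : Finset ℕ),
      ‖(∑ j ∈ s, a j • T (v j)) - ∑ j ∈ s, a j • u j‖
        ≤ (ε/(4*CX)) * (∑ j ∈ s, |a j| ^ q) ^ (1/q) := by
    intro a s
    have h1 : (∑ j ∈ s, a j • T (v j)) - ∑ j ∈ s, a j • u j
        = ∑ j ∈ s, a j • (T (v j) - u j) := by
      rw [← Finset.sum_sub_distrib]
      refine Finset.sum_congr rfl (fun j _ => ?_)
      rw [smul_sub]
    rw [h1]
    have h2 : ‖∑ j ∈ s, a j • (T (v j) - u j)‖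
        ≤ ∑ j ∈ s, |a j| * (2 * τ j * (‖T‖ + 1)) := by
      refine (norm_sum_le _ _).trans (Finset.sum_le_sum (fun j _ => ?_))
      rw [norm_smul, Real.norm_eq_abs]
      exact mul_le_mul_of_nonneg_left (hTvu j) (abs_nonneg _)
    have h3 : ∑ j ∈ s, |a j| * (2 * τ j * (‖T‖ + 1))
        ≤ (∑ i ∈ s, |a i| ^ q) ^ (1/q) * (4 * δ0 * (‖T‖ + 1)) := by
      have h4 : ∀ j ∈ s, |a j| * (2 * τ j * (‖T‖ + 1))
          ≤ (∑ i ∈ s, |a i| ^ q) ^ (1/q) * (2 * τ j * (‖T‖ + 1)) := by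
        intro j hj
        refine mul_le_mul_of_nonneg_right (habsle a s j hj) ?_
        have := (hτpos j).le
        positivity
      refine (Finset.sum_le_sum h4).trans ?_
      have h5 : ∑ j ∈ s, (∑ i ∈ s, |a i| ^ q) ^ (1/q) * (2 * τ j * (‖T‖ + 1))
          = (∑ i ∈ s, |a i| ^ q) ^ (1/q) * (2 * δ0 * (‖T‖ + 1))
            * (∑ j ∈ s, (1/2:ℝ)^j) := by
        rw [Finset.mul_sum]
        refine Finset.sum_congr rfl (fun j _ => ?_)
        rw [hτdef]
        ring
      rw [h5]
      have h6 := sum_geom_two_finset s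
      have h7 : (0:ℝ) ≤ (∑ i ∈ s, |a i| ^ q) ^ (1/q) * (2 * δ0 * (‖T‖ + 1)) := by
        have := hσnonneg a s
        have := hδ0pos.le
        positivity
      calc (∑ i ∈ s, |a i| ^ q) ^ (1/q) * (2 * δ0 * (‖T‖ + 1)) * (∑ j ∈ s, (1/2:ℝ)^j)
          ≤ (∑ i ∈ s, |a i| ^ q) ^ (1/q) * (2 * δ0 * (‖T‖ + 1)) * 2 :=
            mul_le_mul_of_nonneg_left h6 h7
        _ = (∑ i ∈ s, |a i| ^ q) ^ (1/q) * (4 * δ0 * (‖T‖ + 1)) := by ring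
    have h8 : 4 * δ0 * (‖T‖ + 1) ≤ ε/(4*CX) := by
      have h9 : δ0 * (16*CX*(‖T‖+1)) ≤ ε := by
        rw [← le_div_iff₀ (by positivity : (0:ℝ) < 16*CX*(‖T‖+1))]
        exact hδ0c
      rw [le_div_iff₀ (by positivity : (0:ℝ) < 4*CX)]
      nlinarith
    calc ‖∑ j ∈ s, a j • (T (v j) - u j)‖
        ≤ (∑ i ∈ s, |a i| ^ q) ^ (1/q) * (4 * δ0 * (‖T‖ + 1)) := le_trans h2 h3
      _ ≤ (∑ i ∈ s, |a i| ^ q) ^ (1/q) * (ε/(4*CX)) :=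
          mul_le_mul_of_nonneg_left h8 (hσnonneg a s)
      _ = (ε/(4*CX)) * (∑ j ∈ s, |a j| ^ q) ^ (1/q) := by ring
  -- derived estimates
  have ElTv : ∀ (a : ℕ → ℝ) (s : Finset ℕ),
      (ε/(4*CX)) * (∑ j ∈ s, |a j| ^ q) ^ (1/q) ≤ ‖∑ j ∈ s, a j • T (v j)‖ := by
    intro a s
    have h1 : ‖∑ j ∈ s, a j • u j‖ - ‖(∑ j ∈ s, a j • T (v j)) - ∑ j ∈ s, a j • u j‖
        ≤ ‖∑ j ∈ s, a j • T (v j)‖ := by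
      have h2 := norm_sub_norm_le (∑ j ∈ s, a j • u j) (∑ j ∈ s, a j • T (v j))
      rw [norm_sub_rev (∑ j ∈ s, a j • u j)] at h2
      linarith
    have := Elu a s
    have := Epert a s
    have heq : ε/(2*CX) = ε/(4*CX) + ε/(4*CX) := by
      field_simp
      ring
    nlinarith [hσnonneg a s]
  have hTsum : ∀ (a : ℕ → ℝ) (s : Finset ℕ),
      ∑ j ∈ s, a j • T (v j) = T (∑ j ∈ s, a j • v j) := by
    intro a s
    rw [map_sum]
    refine Finset.sum_congr rfl (fun j _ => ?_)
    rw [map_smul]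
  have EuTv : ∀ (a : ℕ → ℝ) (s : Finset ℕ),
      ‖∑ j ∈ s, a j • T (v j)‖ ≤ (3*CY*‖T‖) * (∑ j ∈ s, |a j| ^ q) ^ (1/q) := by
    intro a s
    rw [hTsum a s]
    calc ‖T (∑ j ∈ s, a j • v j)‖ ≤ ‖T‖ * ‖∑ j ∈ s, a j • v j‖ := T.le_opNorm _
      _ ≤ ‖T‖ * ((3*CY) * (∑ j ∈ s, |a j| ^ q) ^ (1/q)) :=
          mul_le_mul_of_nonneg_left (Euv a s) (norm_nonneg T)
      _ = (3*CY*‖T‖) * (∑ j ∈ s, |a j| ^ q) ^ (1/q) := by ring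
  have Elv : ∀ (a : ℕ → ℝ) (s : Finset ℕ),
      (ε/(4*CX*‖T‖)) * (∑ j ∈ s, |a j| ^ q) ^ (1/q) ≤ ‖∑ j ∈ s, a j • v j‖ := by
    intro a s
    have h1 := ElTv a s
    rw [hTsum a s] at h1
    have h2 : ‖T (∑ j ∈ s, a j • v j)‖ ≤ ‖T‖ * ‖∑ j ∈ s, a j • v j‖ := T.le_opNorm _
    rw [div_mul_eq_mul_div, div_le_iff₀ (by positivity : (0:ℝ) < 4*CX*‖T‖)]
    have h3 : ε * (∑ j ∈ s, |a j| ^ q) ^ (1/q)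
        ≤ (4*CX) * (‖T‖ * ‖∑ j ∈ s, a j • v j‖) := by
      have h4 : (ε/(4*CX)) * (∑ j ∈ s, |a j| ^ q) ^ (1/q)
          ≤ ‖T‖ * ‖∑ j ∈ s, a j • v j‖ := le_trans h1 h2
      rw [div_mul_eq_mul_div, div_le_iff₀ (by positivity : (0:ℝ) < 4*CX)] at h4
      linarith
    linarith [h3]
  have Euu : ∀ (a : ℕ → ℝ) (s : Finset ℕ),
      ‖∑ j ∈ s, a j • u j‖
        ≤ (3*CY*‖T‖ + ε/(4*CX)) * (∑ j ∈ s, |a j| ^ q) ^ (1/q) := by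
    intro a s
    have h1 : ‖∑ j ∈ s, a j • u j‖
        ≤ ‖∑ j ∈ s, a j • T (v j)‖
          + ‖(∑ j ∈ s, a j • T (v j)) - ∑ j ∈ s, a j • u j‖ := by
      calc ‖∑ j ∈ s, a j • u j‖
          = ‖(∑ j ∈ s, a j • T (v j))
              - ((∑ j ∈ s, a j • T (v j)) - ∑ j ∈ s, a j • u j)‖ := by
            rw [sub_sub_cancel]
        _ ≤ ‖∑ j ∈ s, a j • T (v j)‖
              + ‖(∑ j ∈ s, a j • T (v j)) - ∑ j ∈ s, a j • u j‖ := norm_sub_le _ _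
    have := EuTv a s
    have := Epert a s
    calc ‖∑ j ∈ s, a j • u j‖
        ≤ (3*CY*‖T‖) * (∑ j ∈ s, |a j| ^ q) ^ (1/q)
          + (ε/(4*CX)) * (∑ j ∈ s, |a j| ^ q) ^ (1/q) := by linarith
      _ = (3*CY*‖T‖ + ε/(4*CX)) * (∑ j ∈ s, |a j| ^ q) ^ (1/q) := by ring
  -- conclusion
  refine ⟨v, u, ⟨A, hdisj, hvmem⟩, ⟨A, hdisj, humem⟩, ?_, ?_, ?_⟩
  · exact combine_equiv q u (ε/(2*CX)) (3*CY*‖T‖ + ε/(4*CX))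
      (by positivity) Elu Euu
  · exact combine_equiv q v (ε/(4*CX*‖T‖)) (3*CY)
      (by positivity) Elv Euv
  · exact combine_equiv q (fun j => T (v j)) (ε/(4*CX)) (3*CY*‖T‖)
      (by positivity) ElTv EuTv
end

section
/- Let X be a real Banach space with an unconditional basis (e_n)_{n∈ℕ} satisfying a lower 1-estimate and let Y be any real Banach space. Then every strictly singular bounded linear operator T : Y → X is compact. -/
open scoped BigOperators

section Aux

variable {X : Type*} [NormedAddCommGroup X] [NormedSpace ℝ X]

lemma aux_low (e : ℕ → X) (C : ℝ)
    (hlow : ∀ (m : ℕ) (f : Fin m → X) (A : Fin m → Finset ℕ),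
      Pairwise (Function.onFun Disjoint A) →
      (∀ i, f i ∈ Submodule.span ℝ (e '' (A i : Set ℕ))) →
      ∑ i, ‖f i‖ ≤ C * ‖∑ i, f i‖)
    (A : ℕ → Finset ℕ) (hA : ∀ i j, i ≠ j → Disjoint (A i) (A j))
    (u : ℕ → X) (hu : ∀ j, u j ∈ Submodule.span ℝ (e '' (A j : Set ℕ)))
    (s : Finset ℕ) : ∑ j ∈ s, ‖u j‖ ≤ C * ‖∑ j ∈ s, u j‖ := by
  classical
  set σ : Fin s.card ≃ {x // x ∈ s} := s.equivFin.symm with hσ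
  have h1 : ∑ j ∈ s, ‖u j‖ = ∑ i : Fin s.card, ‖u ((σ i : {x // x ∈ s}) : ℕ)‖ := by
    rw [← Finset.sum_coe_sort s fun j => ‖u j‖]
    exact (Equiv.sum_comp σ _).symm
  have h2 : ∑ j ∈ s, u j = ∑ i : Fin s.card, u ((σ i : {x // x ∈ s}) : ℕ) := by
    rw [← Finset.sum_coe_sort s u]
    exact (Equiv.sum_comp σ _).symm
  rw [h1, h2]
  refine hlow _ _ (fun i => A ((σ i : {x // x ∈ s}) : ℕ)) ?_ (fun i => hu _)
  intro i j hij
  exact hA _ _ (fun hval => hij (σ.injective (Subtype.ext hval)))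

lemma aux_sum_bound {g : ℕ → X} {x : X} (hg : HasSum g x) {C : ℝ}
    (h : ∀ t : Finset ℕ, ∑ n ∈ t, ‖g n‖ ≤ C * ‖∑ n ∈ t, g n‖) (s : Finset ℕ) :
    ∑ n ∈ s, ‖g n‖ ≤ C * ‖x‖ := by
  have h0 : Filter.Tendsto (fun t : Finset ℕ => ∑ n ∈ t, g n) Filter.atTop (nhds x) := hg
  have h2 : Filter.Tendsto (fun t : Finset ℕ => C * ‖∑ n ∈ t, g n‖) Filter.atTop
      (nhds (C * ‖x‖)) := h0.norm.const_mul C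
  refine ge_of_tendsto h2 ?_
  filter_upwards [Filter.eventually_ge_atTop s] with t hts
  calc ∑ n ∈ s, ‖g n‖ ≤ ∑ n ∈ t, ‖g n‖ :=
        Finset.sum_le_sum_of_subset_of_nonneg hts (fun _ _ _ => norm_nonneg _)
    _ ≤ C * ‖∑ n ∈ t, g n‖ := h t

lemma aux_tail {f : ℕ → ℝ} (hf : Summable f) {η : ℝ} (hη : 0 < η) :
    ∃ N : ℕ, ∀ t : Finset ℕ, (∀ n ∈ t, N ≤ n) → ∑ n ∈ t, f n < η := by
  obtain ⟨s, hs⟩ := summable_iff_vanishing_norm.mp hf η hη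
  refine ⟨s.sup id + 1, fun t ht => ?_⟩
  have hd : Disjoint t s := by
    rw [Finset.disjoint_left]
    intro n hn hns
    have h1 := ht n hn
    have h2 : n ≤ s.sup id := Finset.le_sup (f := id) hns
    omega
  have h3 := hs t hd
  rw [Real.norm_eq_abs] at h3
  exact lt_of_le_of_lt (le_abs_self _) h3

lemma aux_approx {g : ℕ → X} {x : X} (hg : HasSum g x) (s : Finset ℕ) {B : ℝ}
    (hB : ∀ t : Finset ℕ, Disjoint t s → ∑ n ∈ t, ‖g n‖ ≤ B) :
    ‖x - ∑ n ∈ s, g n‖ ≤ B := by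
  classical
  have h0 : Filter.Tendsto (fun t : Finset ℕ => ∑ n ∈ t, g n) Filter.atTop (nhds x) := hg
  have h2 : Filter.Tendsto (fun t : Finset ℕ => ‖∑ n ∈ t, g n - ∑ n ∈ s, g n‖) Filter.atTop
      (nhds ‖x - ∑ n ∈ s, g n‖) := (h0.sub tendsto_const_nhds).norm
  refine le_of_tendsto h2 ?_
  filter_upwards [Filter.eventually_ge_atTop s] with t hts
  have heq : ∑ n ∈ t, g n - ∑ n ∈ s, g n = ∑ n ∈ t \ s, g n :=
    sub_eq_iff_eq_add.mpr (Finset.sum_sdiff hts).symm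
  rw [heq]
  exact le_trans (norm_sum_le _ _) (hB _ (Finset.sdiff_disjoint))

end Aux

set_option maxHeartbeats 1000000 in
theorem statement7 {X Y : Type*} [NormedAddCommGroup X] [NormedSpace ℝ X] [CompleteSpace X]
    [NormedAddCommGroup Y] [NormedSpace ℝ Y] [CompleteSpace Y]
    (e : ℕ → X) (he : IsUncondBasis e) (hlow : LowerEstimate e 1)
    (T : Y →L[ℝ] X) (hss : StrictlySingular T) :
    CompactOp T := by
  classical
  obtain ⟨hne, hbasis⟩ := he
  obtain ⟨C, hC, hlowC⟩ := hlow
  have hlow1 : ∀ (m : ℕ) (f : Fin m → X) (A : Fin m → Finset ℕ),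
      Pairwise (Function.onFun Disjoint A) →
      (∀ i, f i ∈ Submodule.span ℝ (e '' (A i : Set ℕ))) →
      ∑ i, ‖f i‖ ≤ C * ‖∑ i, f i‖ := by
    intro m f A hA hf
    have h := hlowC m f A hA hf
    norm_num [Real.rpow_one] at h
    exact h
  have hkey : ∀ (b : ℕ → ℝ) (t : Finset ℕ), ∑ n ∈ t, ‖b n • e n‖ ≤ C * ‖∑ n ∈ t, b n • e n‖ := by
    intro b t
    refine aux_low e C hlow1 (fun n => {n}) ?_ (fun n => b n • e n) ?_ t
    · intro i j hij
      simpa [Finset.disjoint_singleton] using hij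
    · intro n
      exact Submodule.smul_mem _ _ (Submodule.subset_span ⟨n, by simp, rfl⟩)
  by_contra hnc
  have hTB : ¬ TotallyBounded (T '' Metric.closedBall 0 1) := by
    intro h
    exact hnc (TotallyBounded.isCompact_of_isClosed h.closure isClosed_closure)
  rw [Metric.totallyBounded_iff] at hTB
  push_neg at hTB
  obtain ⟨ε, hε, hcov⟩ := hTB
  have hstep : ∀ s : Finset Y, (∀ x ∈ s, x ∈ Metric.closedBall (0:Y) 1) →
      ∃ w, w ∈ Metric.closedBall (0:Y) 1 ∧ ∀ x ∈ s, ε ≤ ‖T x - T w‖ := by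
    intro s hs
    have h := hcov (T '' (s : Set Y)) ((s.finite_toSet).image T)
    rw [Set.not_subset] at h
    obtain ⟨x, hx, hx2⟩ := h
    obtain ⟨w, hw, rfl⟩ := hx
    refine ⟨w, hw, fun v hv => ?_⟩
    by_contra hlt
    push_neg at hlt
    apply hx2
    refine Set.mem_biUnion ⟨v, hv, rfl⟩ ?_
    rw [Metric.mem_ball, dist_eq_norm, norm_sub_rev]
    exact hlt
  obtain ⟨y, hy1, hysep⟩ := exists_seq_of_forall_finset_exists
      (fun v : Y => v ∈ Metric.closedBall (0:Y) 1)
      (fun v w => ε ≤ ‖T v - T w‖) hstep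
  -- coefficients
  have ha : ∀ k, HasSum (fun n => (hbasis (T (y k))).choose n • e n) (T (y k)) :=
    fun k => (hbasis (T (y k))).choose_spec.1
  set a : ℕ → ℕ → ℝ := fun k => (hbasis (T (y k))).choose with ha_def
  have hTy : ∀ k, ‖T (y k)‖ ≤ ‖T‖ := by
    intro k
    have h1 : ‖y k‖ ≤ 1 := by simpa using hy1 k
    calc ‖T (y k)‖ ≤ ‖T‖ * ‖y k‖ := T.le_opNorm (y k)
      _ ≤ ‖T‖ := mul_le_of_le_one_right (norm_nonneg T) h1
  set M : ℕ → ℝ := fun n => C * ‖T‖ / ‖e n‖ with hM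
  have haM : ∀ k n, |a k n| ≤ M n := by
    intro k n
    have h1 : ∑ m ∈ ({n} : Finset ℕ), ‖a k m • e m‖ ≤ C * ‖T (y k)‖ :=
      aux_sum_bound (ha k) (hkey (a k)) {n}
    rw [Finset.sum_singleton, norm_smul, Real.norm_eq_abs] at h1
    have h2 : |a k n| * ‖e n‖ ≤ C * ‖T‖ :=
      le_trans h1 (mul_le_mul_of_nonneg_left (hTy k) hC.le)
    have hen : 0 < ‖e n‖ := norm_pos_iff.mpr (hne n)
    rw [hM, le_div_iff₀ hen]
    exact h2
  have hKcpt : IsCompact (Set.univ.pi fun n : ℕ => Set.Icc (-(M n)) (M n)) :=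
    isCompact_univ_pi fun n => isCompact_Icc
  have hmem : ∀ k, a k ∈ Set.univ.pi fun n : ℕ => Set.Icc (-(M n)) (M n) := by
    intro k n _
    exact Set.mem_Icc.mpr (abs_le.mp (haM k n))
  obtain ⟨L, -, φ, hφ, hconv⟩ := hKcpt.tendsto_subseq hmem
  have hptconv : ∀ n, Filter.Tendsto (fun i => a (φ i) n) Filter.atTop (nhds (L n)) :=
    tendsto_pi_nhds.mp hconv
  set η : ℝ := ε / (8 * (C + 1)) with hηdef
  have hη : 0 < η := by rw [hηdef]; positivity
  -- step existence
  have hstep2 : ∀ N pq : ℕ, ∃ v : ℕ × ℕ × ℕ,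
      pq < v.1 ∧ v.1 < v.2.1 ∧ N < v.2.2 ∧
      (∑ n ∈ Finset.range N, ‖(a (φ v.2.1) n - a (φ v.1) n) • e n‖ < η) ∧
      (∀ t : Finset ℕ, (∀ n ∈ t, v.2.2 ≤ n) →
        ∑ n ∈ t, ‖(a (φ v.2.1) n - a (φ v.1) n) • e n‖ < η) := by
    intro N pq
    have htend : Filter.Tendsto
        (fun i => ∑ n ∈ Finset.range N, |a (φ i) n - L n| * ‖e n‖) Filter.atTop (nhds 0) := by
      have hterm : ∀ n, Filter.Tendsto (fun i => |a (φ i) n - L n| * ‖e n‖)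
          Filter.atTop (nhds 0) := by
        intro n
        have h1 := (hptconv n).sub (tendsto_const_nhds (x := L n))
        rw [sub_self] at h1
        have h2 := h1.abs
        rw [abs_zero] at h2
        simpa using h2.mul_const ‖e n‖
      have h3 := tendsto_finset_sum (Finset.range N) (fun n _ => hterm n)
      simpa using h3
    have hev : ∀ᶠ i in Filter.atTop,
        ∑ n ∈ Finset.range N, |a (φ i) n - L n| * ‖e n‖ < η/2 :=
      htend.eventually_lt_const (by positivity)
    obtain ⟨q, hq1, hq2⟩ := (hev.and (Filter.eventually_gt_atTop pq)).exists
    obtain ⟨q', hq'1, hq'2⟩ := (hev.and (Filter.eventually_gt_atTop q)).exists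
    have hhead : ∑ n ∈ Finset.range N, ‖(a (φ q') n - a (φ q) n) • e n‖ < η := by
      have hb : ∀ n ∈ Finset.range N, ‖(a (φ q') n - a (φ q) n) • e n‖ ≤
          |a (φ q') n - L n| * ‖e n‖ + |a (φ q) n - L n| * ‖e n‖ := by
        intro n _
        rw [norm_smul, Real.norm_eq_abs]
        have h4 := abs_sub_le (a (φ q') n) (L n) (a (φ q) n)
        have h5 : |L n - a (φ q) n| = |a (φ q) n - L n| := abs_sub_comm _ _
        nlinarith [norm_nonneg (e n)]
      calc ∑ n ∈ Finset.range N, ‖(a (φ q') n - a (φ q) n) • e n‖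
          ≤ ∑ n ∈ Finset.range N,
            (|a (φ q') n - L n| * ‖e n‖ + |a (φ q) n - L n| * ‖e n‖) := Finset.sum_le_sum hb
        _ = (∑ n ∈ Finset.range N, |a (φ q') n - L n| * ‖e n‖) +
            ∑ n ∈ Finset.range N, |a (φ q) n - L n| * ‖e n‖ := Finset.sum_add_distrib
        _ < η/2 + η/2 := add_lt_add hq'1 hq1
        _ = η := add_halves η
    have hd : HasSum (fun n => (a (φ q') n - a (φ q) n) • e n)
        (T (y (φ q')) - T (y (φ q))) := by
      have h6 := (ha (φ q')).sub (ha (φ q))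
      simpa [sub_smul] using h6
    have hsummable : Summable (fun n => ‖(a (φ q') n - a (φ q) n) • e n‖) := by
      refine summable_of_sum_le (c := C * ‖T (y (φ q')) - T (y (φ q))‖) (fun n => norm_nonneg _) ?_
      intro t
      exact aux_sum_bound hd (hkey _) t
    obtain ⟨N'', hN''⟩ := aux_tail hsummable hη
    refine ⟨(q, q', max (N+1) N''), hq2, hq'2, ?_, hhead, ?_⟩
    · exact lt_of_lt_of_le (Nat.lt_succ_self N) (le_max_left _ _)
    · intro t ht
      exact hN'' t (fun n hn => le_trans (le_max_right _ _) (ht n hn))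
  -- recursion
  let F : ℕ × ℕ → ℕ × ℕ × ℕ := fun s => (hstep2 s.1 s.2).choose
  have hF : ∀ s : ℕ × ℕ, s.2 < (F s).1 ∧ (F s).1 < (F s).2.1 ∧ s.1 < (F s).2.2 ∧
      (∑ n ∈ Finset.range s.1, ‖(a (φ (F s).2.1) n - a (φ (F s).1) n) • e n‖ < η) ∧
      (∀ t : Finset ℕ, (∀ n ∈ t, (F s).2.2 ≤ n) →
        ∑ n ∈ t, ‖(a (φ (F s).2.1) n - a (φ (F s).1) n) • e n‖ < η) :=
    fun s => (hstep2 s.1 s.2).choose_spec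
  let G : ℕ → ℕ × ℕ × ℕ := fun j =>
    Nat.rec (motive := fun _ => ℕ × ℕ × ℕ) (F (0, 0)) (fun _ prev => F (prev.2.2, prev.2.1)) j
  let q : ℕ → ℕ := fun j => (G j).1
  let q' : ℕ → ℕ := fun j => (G j).2.1
  let Nf : ℕ → ℕ := fun j => Nat.rec (motive := fun _ => ℕ) 0 (fun j' _ => (G j').2.2) j
  let pq : ℕ → ℕ := fun j => Nat.rec (motive := fun _ => ℕ) 0 (fun j' _ => q' j') j
  have hGj : ∀ j, G j = F (Nf j, pq j) := by
    intro j
    cases j <;> rfl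
  have hprop : ∀ j, pq j < q j ∧ q j < q' j ∧ Nf j < Nf (j+1) ∧
      (∑ n ∈ Finset.range (Nf j), ‖(a (φ (q' j)) n - a (φ (q j)) n) • e n‖ < η) ∧
      (∀ t : Finset ℕ, (∀ n ∈ t, Nf (j+1) ≤ n) →
        ∑ n ∈ t, ‖(a (φ (q' j)) n - a (φ (q j)) n) • e n‖ < η) := by
    intro j
    have h := hF (Nf j, pq j)
    rw [← hGj j] at h
    exact h
  set c : ℕ → ℕ → ℝ := fun j n => a (φ (q' j)) n - a (φ (q j)) n with hc
  set d : ℕ → X := fun j => T (y (φ (q' j))) - T (y (φ (q j))) with hd_def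
  have hdsum : ∀ j, HasSum (fun n => c j n • e n) (d j) := by
    intro j
    have h := (ha (φ (q' j))).sub (ha (φ (q j)))
    simpa [hc, hd_def, sub_smul] using h
  set u : ℕ → X := fun j => ∑ n ∈ Finset.Ico (Nf j) (Nf (j+1)), c j n • e n with hu_def
  have hNmono : StrictMono Nf := strictMono_nat_of_lt_succ (fun j => (hprop j).2.2.1)
  have hdu : ∀ j, ‖d j - u j‖ ≤ 2 * η := by
    intro j
    refine aux_approx (hdsum j) _ ?_
    intro t hdisj
    have hsplit : t = (t.filter (fun n => n < Nf j)) ∪ (t.filter (fun n => ¬ n < Nf j)) :=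
      (Finset.filter_union_filter_not_eq _ t).symm
    have hd2 : Disjoint (t.filter (fun n => n < Nf j)) (t.filter (fun n => ¬ n < Nf j)) :=
      Finset.disjoint_filter_filter_not t t _
    rw [hsplit, Finset.sum_union hd2]
    have h1 : ∑ n ∈ t.filter (fun n => n < Nf j), ‖c j n • e n‖ ≤
        ∑ n ∈ Finset.range (Nf j), ‖c j n • e n‖ := by
      apply Finset.sum_le_sum_of_subset_of_nonneg
      · intro n hn
        rw [Finset.mem_filter] at hn
        exact Finset.mem_range.mpr hn.2
      · intros; exact norm_nonneg _
    have h2 : ∀ n ∈ t.filter (fun n => ¬ n < Nf j), Nf (j+1) ≤ n := by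
      intro n hn
      rw [Finset.mem_filter] at hn
      have hnt : n ∉ Finset.Ico (Nf j) (Nf (j+1)) :=
        fun hmem => (Finset.disjoint_left.mp hdisj hn.1) hmem
      rw [Finset.mem_Ico] at hnt
      push_neg at hnt
      exact hnt (Nat.le_of_not_lt hn.2)
    have h3 := (hprop j).2.2.2.2 _ h2
    have h4 := (hprop j).2.2.2.1
    have h5 := lt_of_le_of_lt h1 h4
    linarith
  have hdnorm : ∀ j, ε ≤ ‖d j‖ := by
    intro j
    have h := hysep (φ (q j)) (φ (q' j)) (hφ ((hprop j).2.1))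
    calc ε ≤ ‖T (y (φ (q j))) - T (y (φ (q' j)))‖ := h
      _ = ‖d j‖ := by rw [hd_def, norm_sub_rev]
  have hunorm : ∀ j, ε - 2*η ≤ ‖u j‖ := by
    intro j
    have h1 := hdu j
    have h2 := hdnorm j
    have h3 := norm_sub_norm_le (d j) (u j)
    linarith
  have huspan : ∀ j, u j ∈ Submodule.span ℝ (e '' ((Finset.Ico (Nf j) (Nf (j+1))) : Set ℕ)) := by
    intro j
    refine Submodule.sum_mem _ ?_
    intro n hn
    exact Submodule.smul_mem _ _ (Submodule.subset_span ⟨n, by simpa using hn, rfl⟩)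
  have hIco : ∀ i j, i ≠ j →
      Disjoint (Finset.Ico (Nf i) (Nf (i+1))) (Finset.Ico (Nf j) (Nf (j+1))) := by
    intro i j hij
    rw [Finset.disjoint_left]
    intro n hni hnj
    rw [Finset.mem_Ico] at hni hnj
    rcases lt_or_gt_of_ne hij with h | h
    · have h6 : Nf (i+1) ≤ Nf j := hNmono.monotone h
      omega
    · have h6 : Nf (j+1) ≤ Nf i := hNmono.monotone h
      omega
  set δ : ℝ := (ε - 2*η)/C - 2*η with hδ
  have hC1 : C + 1 ≠ 0 := by positivity
  have hδpos : 0 < δ := by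
    have h1 : 2*η*(C+1) = ε/4 := by
      rw [hηdef]
      field_simp
      ring
    rw [hδ, sub_pos, lt_div_iff₀ hC]
    nlinarith
  have hlower : ∀ (cc : ℕ → ℝ) (s : Finset ℕ),
      δ * ∑ j ∈ s, |cc j| ≤ ‖∑ j ∈ s, cc j • d j‖ := by
    intro cc s
    have h1 : ∑ j ∈ s, ‖cc j • u j‖ ≤ C * ‖∑ j ∈ s, cc j • u j‖ :=
      aux_low e C hlow1 (fun j => Finset.Ico (Nf j) (Nf (j+1))) hIco (fun j => cc j • u j)
        (fun j => Submodule.smul_mem _ _ (huspan j)) s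
    have h2 : (ε - 2*η) * ∑ j ∈ s, |cc j| ≤ ∑ j ∈ s, ‖cc j • u j‖ := by
      rw [Finset.mul_sum]
      apply Finset.sum_le_sum
      intro j _
      rw [norm_smul, Real.norm_eq_abs]
      have h := hunorm j
      nlinarith [abs_nonneg (cc j)]
    have h3 : ‖∑ j ∈ s, cc j • d j - ∑ j ∈ s, cc j • u j‖ ≤ 2*η * ∑ j ∈ s, |cc j| := by
      rw [← Finset.sum_sub_distrib]
      calc ‖∑ j ∈ s, (cc j • d j - cc j • u j)‖ ≤ ∑ j ∈ s, ‖cc j • d j - cc j • u j‖ :=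
            norm_sum_le _ _
        _ ≤ ∑ j ∈ s, 2*η * |cc j| := by
            apply Finset.sum_le_sum
            intro j _
            rw [← smul_sub, norm_smul, Real.norm_eq_abs]
            have h := hdu j
            nlinarith [abs_nonneg (cc j)]
        _ = 2*η * ∑ j ∈ s, |cc j| := by rw [← Finset.mul_sum]
    have hS : (0:ℝ) ≤ ∑ j ∈ s, |cc j| := Finset.sum_nonneg fun j _ => abs_nonneg _
    have h5 : (ε - 2*η) * ∑ j ∈ s, |cc j| ≤ C * ‖∑ j ∈ s, cc j • u j‖ := le_trans h2 h1
    have h4 : ‖∑ j ∈ s, cc j • u j‖ ≤ ‖∑ j ∈ s, cc j • d j‖ + 2*η * ∑ j ∈ s, |cc j| := by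
      have h6 := norm_sub_norm_le (∑ j ∈ s, cc j • u j) (∑ j ∈ s, cc j • d j)
      rw [norm_sub_rev] at h6
      linarith
    have e1 : C * (δ * ∑ j ∈ s, |cc j|) =
        (ε - 2*η) * ∑ j ∈ s, |cc j| - 2*η*C*(∑ j ∈ s, |cc j|) := by
      rw [hδ]
      field_simp
    have hmul := mul_le_mul_of_nonneg_left h4 hC.le
    have h7 : C * (δ * ∑ j ∈ s, |cc j|) ≤ C * ‖∑ j ∈ s, cc j • d j‖ := by nlinarith
    exact le_of_mul_le_mul_left h7 hC
  set z : ℕ → Y := fun j => y (φ (q' j)) - y (φ (q j)) with hz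
  have hTz : ∀ j, T (z j) = d j := fun j => by
    rw [hz, hd_def]
    simp [map_sub]
  have hznorm : ∀ j, ‖z j‖ ≤ 2 := by
    intro j
    have h1 : ‖y (φ (q' j))‖ ≤ 1 := by simpa using hy1 _
    have h2 : ‖y (φ (q j))‖ ≤ 1 := by simpa using hy1 _
    calc ‖z j‖ ≤ ‖y (φ (q' j))‖ + ‖y (φ (q j))‖ := norm_sub_le _ _
      _ ≤ 2 := by linarith
  set Z : Submodule ℝ Y := Submodule.span ℝ (Set.range z) with hZ
  have hbelow : ∀ v ∈ Z, (δ/2) * ‖v‖ ≤ ‖T v‖ := by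
    intro v hv
    rw [hZ] at hv
    obtain ⟨cc, hcc⟩ := Finsupp.mem_span_range_iff_exists_finsupp.mp hv
    have hv1 : v = ∑ j ∈ cc.support, cc j • z j := by
      rw [← hcc]; rfl
    have hTv : T v = ∑ j ∈ cc.support, cc j • d j := by
      rw [hv1, map_sum]
      simp only [ContinuousLinearMap.map_smul, hTz]
    have hnormv : ‖v‖ ≤ 2 * ∑ j ∈ cc.support, |cc j| := by
      rw [hv1]
      calc ‖∑ j ∈ cc.support, cc j • z j‖ ≤ ∑ j ∈ cc.support, ‖cc j • z j‖ := norm_sum_le _ _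
        _ ≤ ∑ j ∈ cc.support, 2 * |cc j| := by
            apply Finset.sum_le_sum
            intro j _
            rw [norm_smul, Real.norm_eq_abs]
            nlinarith [hznorm j, abs_nonneg (cc j)]
        _ = 2 * ∑ j ∈ cc.support, |cc j| := by rw [← Finset.mul_sum]
    have h1 := hlower cc cc.support
    rw [← hTv] at h1
    have h2 : (δ/2) * (2 * ∑ j ∈ cc.support, |cc j|) = δ * ∑ j ∈ cc.support, |cc j| := by ring
    have h3 := mul_le_mul_of_nonneg_left hnormv (le_of_lt (half_pos hδpos))
    calc (δ/2) * ‖v‖ ≤ (δ/2) * (2 * ∑ j ∈ cc.support, |cc j|) := h3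
      _ = δ * ∑ j ∈ cc.support, |cc j| := h2
      _ ≤ ‖T v‖ := h1
  have hfin : FiniteDimensional ℝ Z := hss Z (δ/2) (half_pos hδpos) hbelow
  have hli : LinearIndependent ℝ z := by
    rw [linearIndependent_iff']
    intro s g hsum j hj
    have h1 : T (∑ i ∈ s, g i • z i) = ∑ i ∈ s, g i • d i := by
      rw [map_sum]
      simp only [ContinuousLinearMap.map_smul, hTz]
    rw [hsum, map_zero] at h1
    have h2 := hlower g s
    rw [← h1, norm_zero] at h2
    have hSn : (0:ℝ) ≤ ∑ i ∈ s, |g i| := Finset.sum_nonneg fun _ _ => abs_nonneg _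
    have hS0 : ∑ i ∈ s, |g i| = 0 := by nlinarith
    have h3 := (Finset.sum_eq_zero_iff_of_nonneg (fun i _ => abs_nonneg (g i))).mp hS0 j hj
    exact abs_eq_zero.mp h3
  have hziZ : ∀ j, z j ∈ Z := fun j => Submodule.subset_span ⟨j, rfl⟩
  let z' : ℕ → Z := fun j => ⟨z j, hziZ j⟩
  have hli' : LinearIndependent ℝ z' := by
    apply LinearIndependent.of_comp Z.subtype
    exact hli
  exact Module.Finite.not_linearIndependent_of_infinite z' hli'
end
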